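/- arXiv:1307.8403 — 3 statements merged into one kernel-verified Lean document; each statement's English description precedes it below -/
import Mathlib

section
/- Let n ≥ 2 and j ∈ {2,…,n−1}. Among the (n−1)! permutations σ of {1,…,n} with σ(1) = j+1, the number of those for which exactly k indices i ∈ {j+1,…,n} satisfy σ(i) ≤ j equals (n−1)! · C(j,k)·C(n−j−1, n−j−k)/C(n−1, n−j); equivalently, this count equals C(j,k)·C(n−j−1, n−j−k)·(j−1)!·(n−j)!. (Consequently, conditional on the partitioning index I_n = j, the number T_n of key exchanges in the first partitioning step of Hoare's Quickselect is hypergeometrically Hyp(n−1; j, n−j) distributed.) -/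
open MeasureTheory

noncomputable section

open Finset

section Helpers

variable {α : Type*} [Fintype α] [DecidableEq α]

private lemma subtypeCongr_apply' {p q : α → Prop} [DecidablePred p] [DecidablePred q]
    (e : { x // p x } ≃ { x // q x }) (f : { x // ¬p x } ≃ { x // ¬q x }) (a : α) :
    Equiv.subtypeCongr e f a = if h : p a then (e ⟨a, h⟩ : α) else (f ⟨a, h⟩ : α) := by
  by_cases h : p a <;>
    simp [Equiv.subtypeCongr, h, Equiv.sumCompl_symm_apply_of_pos, Equiv.sumCompl_symm_apply_of_neg]

private lemma fiber_count (T W : Finset α) (hW : W.card = T.card) :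
    (univ.filter (fun τ : Equiv.Perm α => T.image τ = W)).card
      = T.card.factorial * Tᶜ.card.factorial := by
  rw [← Fintype.card_subtype]
  have key : Fintype.card (({x // x ∈ T} ≃ {x // x ∈ W}) × ({x // ¬ x ∈ T} ≃ {x // ¬ x ∈ W}))
      = Fintype.card {τ : Equiv.Perm α // T.image τ = W} := by
    apply Fintype.card_of_bijective (f := fun ef =>
      ⟨Equiv.subtypeCongr ef.1 ef.2,
       by
        ext y
        simp only [mem_image]
        constructor
        · rintro ⟨x, hx, rfl⟩
          rw [subtypeCongr_apply', dif_pos hx]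
          exact (ef.1 ⟨x, hx⟩).2
        · intro hy
          refine ⟨ef.1.symm ⟨y, hy⟩, (ef.1.symm ⟨y, hy⟩).2, ?_⟩
          rw [subtypeCongr_apply', dif_pos (ef.1.symm ⟨y, hy⟩).2]
          simp⟩)
    constructor
    · rintro ⟨e, f⟩ ⟨e', f'⟩ h
      have h' : Equiv.subtypeCongr e f = Equiv.subtypeCongr e' f' := congrArg Subtype.val h
      have hfun : ∀ a : α, Equiv.subtypeCongr e f a = Equiv.subtypeCongr e' f' a :=
        fun a => by rw [h']
      have he : e = e' := by
        ext x
        have := hfun x.1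
        rw [subtypeCongr_apply', subtypeCongr_apply', dif_pos x.2, dif_pos x.2] at this
        exact_mod_cast this
      have hf : f = f' := by
        ext x
        have := hfun x.1
        rw [subtypeCongr_apply', subtypeCongr_apply', dif_neg x.2, dif_neg x.2] at this
        exact_mod_cast this
      simp [he, hf]
    · rintro ⟨τ, hτ⟩
      have hmem : ∀ x : α, x ∈ T → τ x ∈ W := by
        intro x hx; rw [← hτ]; exact mem_image_of_mem _ hx
      have hmem' : ∀ y : α, y ∈ W → τ.symm y ∈ T := by
        intro y hy; rw [← hτ] at hy
        obtain ⟨x, hx, rfl⟩ := mem_image.mp hy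
        simpa using hx
      have hnot : ∀ x : α, ¬ x ∈ T → ¬ τ x ∈ W := by
        intro x hx hc
        exact hx (by simpa using hmem' _ hc)
      have hnot' : ∀ y : α, ¬ y ∈ W → ¬ τ.symm y ∈ T := by
        intro y hy hc
        exact hy (by simpa using hmem _ hc)
      refine ⟨⟨⟨fun x => ⟨τ x, hmem x.1 x.2⟩, fun y => ⟨τ.symm y, hmem' y.1 y.2⟩,
          fun x => by simp, fun y => by simp⟩,
        ⟨fun x => ⟨τ x, hnot x.1 x.2⟩, fun y => ⟨τ.symm y, hnot' y.1 y.2⟩,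
          fun x => by simp, fun y => by simp⟩⟩, ?_⟩
      apply Subtype.ext
      apply Equiv.ext
      intro x
      rw [subtypeCongr_apply']
      by_cases h : x ∈ T <;> simp [h]
  rw [← key, Fintype.card_prod]
  have c1 : Fintype.card {x // x ∈ T} = T.card := Fintype.card_coe T
  have c2 : Fintype.card {x // x ∈ W} = W.card := Fintype.card_coe W
  have c3 : Fintype.card {x // ¬ x ∈ T} = Tᶜ.card := by
    rw [Fintype.card_subtype_compl, c1, card_compl]
  have c4 : Fintype.card {x // ¬ x ∈ W} = Wᶜ.card := by
    rw [Fintype.card_subtype_compl, c2, card_compl]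
  rw [Fintype.card_equiv (Fintype.equivOfCardEq (by rw [c1, c2, hW])),
      Fintype.card_equiv (Fintype.equivOfCardEq (by rw [c3, c4, card_compl, card_compl, hW])),
      c1, c3]

private lemma Wcount (T S : Finset α) (k : ℕ) (hk : k ≤ T.card) :
    ((univ.powersetCard T.card).filter (fun W => (W ∩ S).card = k)).card
      = S.card.choose k * Sᶜ.card.choose (T.card - k) := by
  rw [← Finset.card_powersetCard, ← Finset.card_powersetCard, ← Finset.card_product]
  apply Finset.card_bij' (fun W _ => (W ∩ S, W \ S)) (fun AB _ => AB.1 ∪ AB.2)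
  · intro W hW
    simp only [mem_filter, mem_powersetCard_univ] at hW
    have hsd : (W \ S).card = T.card - k := by
      have := Finset.card_inter_add_card_sdiff W S
      omega
    simp only [mem_product, mem_powersetCard]
    exact ⟨⟨inter_subset_right, hW.2⟩,
      ⟨fun x hx => mem_compl.mpr (mem_sdiff.mp hx).2, hsd⟩⟩
  · rintro ⟨A, B⟩ hAB
    simp only [mem_product, mem_powersetCard] at hAB
    obtain ⟨⟨hAS, hA⟩, ⟨hBS, hB⟩⟩ := hAB
    have hdisj : Disjoint A B := by
      apply Finset.disjoint_left.mpr
      intro x hxA hxB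
      exact (mem_compl.mp (hBS hxB)) (hAS hxA)
    have hAScap : (A ∪ B) ∩ S = A := by
      ext x
      simp only [mem_inter, mem_union]
      constructor
      · rintro ⟨hx | hx, hxS⟩
        · exact hx
        · exact absurd hxS (mem_compl.mp (hBS hx))
      · intro hx; exact ⟨Or.inl hx, hAS hx⟩
    simp only [mem_filter, mem_powersetCard_univ]
    rw [card_union_of_disjoint hdisj, hA, hB, hAScap]
    omega
  · intro W hW
    simp only
    ext x
    simp only [mem_union, mem_inter, mem_sdiff]
    tauto
  · rintro ⟨A, B⟩ hAB
    simp only [mem_product, mem_powersetCard] at hAB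
    obtain ⟨⟨hAS, hA⟩, ⟨hBS, hB⟩⟩ := hAB
    have h1 : (A ∪ B) ∩ S = A := by
      ext x
      simp only [mem_inter, mem_union]
      constructor
      · rintro ⟨hx | hx, hxS⟩
        · exact hx
        · exact absurd hxS (mem_compl.mp (hBS hx))
      · intro hx; exact ⟨Or.inl hx, hAS hx⟩
    have h2 : (A ∪ B) \ S = B := by
      ext x
      simp only [mem_sdiff, mem_union]
      constructor
      · rintro ⟨hx | hx, hxS⟩
        · exact absurd (hAS hx) hxS
        · exact hx
      · intro hx; exact ⟨Or.inr hx, mem_compl.mp (hBS hx)⟩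
    simp [h1, h2]

private lemma img_card (T S : Finset α) (τ : Equiv.Perm α) :
    (T.image τ ∩ S).card = (T.filter (fun i => τ i ∈ S)).card := by
  have h : T.image τ ∩ S = (T.filter (fun i => τ i ∈ S)).image τ := by
    ext y
    simp only [mem_inter, mem_image, mem_filter]
    constructor
    · rintro ⟨⟨x, hx, rfl⟩, hyS⟩
      exact ⟨x, ⟨hx, hyS⟩, rfl⟩
    · rintro ⟨x, ⟨hx, hxS⟩, rfl⟩
      exact ⟨⟨x, hx, rfl⟩, hxS⟩
  rw [h, card_image_of_injective _ τ.injective]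

private lemma perm_count (T S : Finset α) (k : ℕ) (hk : k ≤ T.card) :
    (univ.filter (fun τ : Equiv.Perm α => (T.filter (fun i => τ i ∈ S)).card = k)).card
      = S.card.choose k * Sᶜ.card.choose (T.card - k) * T.card.factorial * Tᶜ.card.factorial := by
  set 𝒲 := (univ.powersetCard T.card).filter (fun W => (W ∩ S).card = k) with h𝒲
  rw [Finset.card_eq_sum_card_fiberwise (f := fun τ : Equiv.Perm α => T.image τ) (t := 𝒲)
    (fun τ hτ => by
      simp only [coe_filter, Set.mem_setOf_eq, mem_filter, mem_univ, true_and] at hτ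
      simp only [h𝒲, coe_filter, Set.mem_setOf_eq, mem_filter, mem_powersetCard_univ]
      exact ⟨card_image_of_injective _ τ.injective, by rw [img_card]; exact hτ⟩)]
  have hfib : ∀ W ∈ 𝒲, ((univ.filter (fun τ : Equiv.Perm α =>
      (T.filter (fun i => τ i ∈ S)).card = k)).filter
        (fun τ : Equiv.Perm α => T.image τ = W)).card
      = T.card.factorial * Tᶜ.card.factorial := by
    intro W hW
    simp only [h𝒲, mem_filter, mem_powersetCard_univ] at hW
    rw [filter_filter]
    have : ∀ τ : Equiv.Perm α,
        ((T.filter (fun i => τ i ∈ S)).card = k ∧ T.image τ = W) ↔ T.image τ = W := by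
      intro τ
      constructor
      · exact And.right
      · intro h
        refine ⟨?_, h⟩
        rw [← img_card, h]
        exact hW.2
    rw [filter_congr (fun τ _ => this τ)]
    exact fiber_count T W hW.1
  rw [Finset.sum_congr rfl hfib, Finset.sum_const, smul_eq_mul, Wcount T S k hk]
  ring

private lemma card_filter_val_lt (N c : ℕ) (h : c ≤ N) :
    (univ.filter (fun m : Fin N => (m : ℕ) < c)).card = c := by
  rw [← Fintype.card_subtype]
  have e : {m : Fin N // (m : ℕ) < c} ≃ Fin c :=
    ⟨fun m => ⟨m.1.1, m.2⟩, fun x => ⟨⟨x.1, lt_of_lt_of_le x.2 h⟩, x.2⟩,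
     fun m => by ext; rfl, fun x => by ext; rfl⟩
  rw [Fintype.card_congr e, Fintype.card_fin]

end Helpers


/-- Among the `(n−1)!` permutations `σ` of `{1,…,n}` (modelled as `Equiv.Perm (Fin n)` with
the obvious shift by one) satisfying `σ(1) = j+1`, the number of those for which exactly `k`
indices `i ∈ {j+1,…,n}` satisfy `σ(i) ≤ j` equals
`(n−1)!·C(j,k)·C(n−j−1, n−j−k)/C(n−1, n−j) = C(j,k)·C(n−j−1, n−j−k)·(j−1)!·(n−j)!`. -/
theorem quickselect_partition_count (n j k : ℕ) (hn : 2 ≤ n) (hj : 2 ≤ j)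
    (hjn : j ≤ n - 1) (hk : k ≤ min j (n - j)) :
    Nat.card {σ : Equiv.Perm (Fin n) //
        σ ⟨0, by omega⟩ = ⟨j, by omega⟩ ∧
        Nat.card {i : Fin n // j ≤ (i : ℕ) ∧ ((σ i) : ℕ) < j} = k}
      = j.choose k * (n - j - 1).choose (n - j - k) * (j - 1).factorial
          * (n - j).factorial ∧
    ((Nat.card {σ : Equiv.Perm (Fin n) //
        σ ⟨0, by omega⟩ = ⟨j, by omega⟩ ∧
        Nat.card {i : Fin n // j ≤ (i : ℕ) ∧ ((σ i) : ℕ) < j} = k} : ℝ)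
      = ((n - 1).factorial : ℝ) * ((j.choose k : ℝ) * ((n - j - 1).choose (n - j - k) : ℝ))
          / (((n - 1).choose (n - j) : ℝ))) := by
  classical
  obtain ⟨N, rfl⟩ : ∃ N, n = N + 1 := ⟨n - 1, by omega⟩
  have hjN : j ≤ N := by omega
  have hj1 : j < N + 1 := by omega
  -- pointwise value computation
  have succ_val : ∀ (τ : Equiv.Perm (Fin N)) (m : Fin N),
      (((Equiv.Perm.decomposeFin.symm (⟨j, hj1⟩, τ)) m.succ : Fin (N+1)) : ℕ) < j
        ↔ ((τ m : ℕ)) < j := by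
    intro τ m
    rw [Equiv.Perm.decomposeFin_symm_apply_succ]
    rcases eq_or_ne ((τ m).succ) (⟨j, hj1⟩ : Fin (N+1)) with h | h
    · rw [h, Equiv.swap_apply_right]
      have hv : ((τ m : ℕ)) + 1 = j := by
        have := congrArg Fin.val h
        simpa [Fin.val_succ] using this
      simp only [Fin.val_zero]
      omega
    · rw [Equiv.swap_apply_of_ne_of_ne (Fin.succ_ne_zero _) h]
      have hne : ((τ m : ℕ)) + 1 ≠ j := by
        intro hc
        exact h (Fin.ext (by simpa [Fin.val_succ] using hc))
      rw [Fin.val_succ]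
      omega
  -- card of index sets transfers along succ
  have cardiff : ∀ τ : Equiv.Perm (Fin N),
      Nat.card {i : Fin (N+1) // j ≤ (i : ℕ) ∧
          (((Equiv.Perm.decomposeFin.symm (⟨j, hj1⟩, τ)) i : Fin (N+1)) : ℕ) < j}
        = Nat.card {m : Fin N // j - 1 ≤ (m : ℕ) ∧ ((τ m : ℕ)) < j} := by
    intro τ
    apply Nat.card_congr
    have hne : ∀ i : {i : Fin (N+1) // j ≤ (i : ℕ) ∧
        (((Equiv.Perm.decomposeFin.symm (⟨j, hj1⟩, τ)) i : Fin (N+1)) : ℕ) < j}, i.1 ≠ 0 := by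
      intro i h
      have := i.2.1
      rw [h] at this
      simp only [Fin.val_zero] at this
      omega
    exact
      { toFun := fun i => ⟨i.1.pred (hne i), by
          constructor
          · have := i.2.1
            rw [Fin.coe_pred]
            omega
          · have h2 := i.2.2
            have hs : (i.1.pred (hne i)).succ = i.1 := Fin.succ_pred _ _
            rw [← hs] at h2
            exact (succ_val τ _).mp h2⟩
        invFun := fun m => ⟨m.1.succ, by
          constructor
          · rw [Fin.val_succ]
            have := m.2.1
            omega
          · exact (succ_val τ m.1).mpr m.2.2⟩
        left_inv := fun i => Subtype.ext (Fin.succ_pred _ (hne i))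
        right_inv := fun m => Subtype.ext (Fin.pred_succ m.1 (h := Fin.succ_ne_zero _)) }
  -- transfer between the two permutation subtypes
  have E2 : ∀ x : Fin (N+1) × Equiv.Perm (Fin N),
      ((Equiv.Perm.decomposeFin.symm x) ⟨0, Nat.succ_pos N⟩ = (⟨j, hj1⟩ : Fin (N+1)) ∧
        Nat.card {i : Fin (N+1) // j ≤ (i : ℕ) ∧
          (((Equiv.Perm.decomposeFin.symm x) i : Fin (N+1)) : ℕ) < j} = k)
      ↔ (x.1 = (⟨j, hj1⟩ : Fin (N+1)) ∧
          Nat.card {m : Fin N // j - 1 ≤ (m : ℕ) ∧ ((x.2 m : ℕ)) < j} = k) := by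
    rintro ⟨p, τ⟩
    have h0 : (⟨0, Nat.succ_pos N⟩ : Fin (N+1)) = 0 := by
      ext
      simp
    rw [h0, Equiv.Perm.decomposeFin_symm_apply_zero]
    constructor
    · rintro ⟨rfl, h2⟩
      exact ⟨rfl, by rw [← cardiff τ]; exact h2⟩
    · rintro ⟨rfl, h2⟩
      exact ⟨rfl, by rw [cardiff τ]; exact h2⟩
  have E : {σ : Equiv.Perm (Fin (N+1)) //
        σ ⟨0, by omega⟩ = ⟨j, by omega⟩ ∧
        Nat.card {i : Fin (N+1) // j ≤ (i : ℕ) ∧ ((σ i : ℕ)) < j} = k}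
      ≃ {τ : Equiv.Perm (Fin N) //
          Nat.card {m : Fin N // j - 1 ≤ (m : ℕ) ∧ ((τ m : ℕ)) < j} = k} := by
    have E3 : {x : Fin (N+1) × Equiv.Perm (Fin N) //
          x.1 = (⟨j, hj1⟩ : Fin (N+1)) ∧
          Nat.card {m : Fin N // j - 1 ≤ (m : ℕ) ∧ ((x.2 m : ℕ)) < j} = k}
        ≃ {τ : Equiv.Perm (Fin N) //
            Nat.card {m : Fin N // j - 1 ≤ (m : ℕ) ∧ ((τ m : ℕ)) < j} = k} :=
      { toFun := fun x => ⟨x.1.2, x.2.2⟩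
        invFun := fun τ => ⟨(⟨j, hj1⟩, τ.1), rfl, τ.2⟩
        left_inv := by
          rintro ⟨⟨p, τ⟩, h1, h2⟩
          apply Subtype.ext
          simp only at h1 ⊢
          rw [h1]
        right_inv := fun τ => rfl }
    refine (Equiv.subtypeEquiv Equiv.Perm.decomposeFin (fun σ => ?_)).trans E3
    have hx := E2 (Equiv.Perm.decomposeFin σ)
    rw [Equiv.symm_apply_apply] at hx
    exact hx
  have count : Nat.card {σ : Equiv.Perm (Fin (N+1)) //
        σ ⟨0, by omega⟩ = ⟨j, by omega⟩ ∧
        Nat.card {i : Fin (N+1) // j ≤ (i : ℕ) ∧ ((σ i : ℕ)) < j} = k}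
      = j.choose k * (N + 1 - j - 1).choose (N + 1 - j - k) * (j - 1).factorial
          * (N + 1 - j).factorial := by
    rw [Nat.card_congr E, Nat.card_eq_fintype_card, Fintype.card_subtype]
    set T : Finset (Fin N) := univ.filter (fun m : Fin N => j - 1 ≤ (m : ℕ)) with hT
    set S : Finset (Fin N) := univ.filter (fun v : Fin N => (v : ℕ) < j) with hS
    have hfeq : ∀ τ : Equiv.Perm (Fin N),
        (Nat.card {m : Fin N // j - 1 ≤ (m : ℕ) ∧ ((τ m : ℕ)) < j} = k)
          ↔ (T.filter (fun i => τ i ∈ S)).card = k := by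
      intro τ
      rw [Nat.card_eq_fintype_card, Fintype.card_subtype]
      have : T.filter (fun i => τ i ∈ S)
          = univ.filter (fun m : Fin N => j - 1 ≤ (m : ℕ) ∧ ((τ m : ℕ)) < j) := by
        rw [hT, filter_filter]
        apply filter_congr
        intro m _
        simp [hS]
      rw [this]
    rw [filter_congr (fun τ _ => hfeq τ)]
    have hScard : S.card = j := card_filter_val_lt N j hjN
    have hTcard : T.card = N - (j - 1) := by
      have hcompl : T = (univ.filter (fun m : Fin N => (m : ℕ) < j - 1))ᶜ := by
        ext m
        simp [hT, not_lt]
      rw [hcompl, card_compl, card_filter_val_lt N (j - 1) (by omega), Fintype.card_fin]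
    have hkT : k ≤ T.card := by
      rw [hTcard]; omega
    have hSc : Sᶜ.card = N - j := by
      rw [card_compl, hScard, Fintype.card_fin]
    have hTc : Tᶜ.card = N - (N - (j - 1)) := by
      rw [card_compl, hTcard, Fintype.card_fin]
    rw [perm_count T S k hkT, hSc, hTc, hScard, hTcard]
    have e1 : N + 1 - j - 1 = N - j := by omega
    have e2 : N + 1 - j = N - (j - 1) := by omega
    have e3 : N - (j - 1) - k = N + 1 - j - k := by omega
    have e4 : N - (N - (j - 1)) = j - 1 := by omega
    rw [e1, e2, e3, e4]
    ring
  refine ⟨count, ?_⟩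
  rw [count]
  have hsub : N + 1 - 1 = N := by omega
  rw [hsub]
  have hchoose : N.choose (N + 1 - j) * (N + 1 - j).factorial * (j - 1).factorial
      = N.factorial := by
    have h := Nat.choose_mul_factorial_mul_factorial (n := N) (k := N + 1 - j) (by omega)
    have : N - (N + 1 - j) = j - 1 := by omega
    rw [this] at h
    exact h
  have hpos : 0 < N.choose (N + 1 - j) := Nat.choose_pos (by omega)
  rw [eq_div_iff (by exact_mod_cast hpos.ne')]
  push_cast [← hchoose]
  ring
end
end

section
/- There is exactly one probability measure μ on ℝ with the following property: whenever X and U are independent random variables with X distributed according to μ and U uniformly distributed on [0,1], the random variable √U·X + √U·(1−√U) is also distributed according to μ. -/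
open MeasureTheory

noncomputable section

/-- The uniform distribution on `[0,1]`. -/
def unif : Measure ℝ := volume.restrict (Set.Icc 0 1)

/-- The map `(x, u) ↦ √u·x + √u·(1 − √u)`. -/
def rdeMap (q : ℝ × ℝ) : ℝ :=
  Real.sqrt q.2 * q.1 + Real.sqrt q.2 * (1 - Real.sqrt q.2)

open Set Filter Topology
open scoped ENNReal NNReal

lemma measurable_rdeMap : Measurable rdeMap := by
  unfold rdeMap
  have h : Measurable fun q : ℝ × ℝ => Real.sqrt q.2 :=
    Real.continuous_sqrt.measurable.comp measurable_snd
  exact (h.mul measurable_fst).add (h.mul (measurable_const.sub h))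

instance : IsProbabilityMeasure unif :=
  ⟨by simp [unif, Real.volume_Icc]⟩

/-- `x ↦ t/√u - (1 - √u)`. -/
def rdeArg (t u : ℝ) : ℝ := t / Real.sqrt u - (1 - Real.sqrt u)

lemma measurable_rdeArg (t : ℝ) : Measurable fun u => rdeArg t u := by
  unfold rdeArg
  exact (measurable_const.div Real.continuous_sqrt.measurable).sub
    (measurable_const.sub Real.continuous_sqrt.measurable)

lemma slice_eq {t u : ℝ} (hu : 0 < u) :
    {x : ℝ | rdeMap (x, u) ≤ t} = Iic (rdeArg t u) := by
  have hs : 0 < Real.sqrt u := Real.sqrt_pos.2 hu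
  ext x
  simp only [rdeMap, mem_setOf_eq, mem_Iic, rdeArg]
  rw [show t / Real.sqrt u - (1 - Real.sqrt u)
      = (t - Real.sqrt u * (1 - Real.sqrt u)) / Real.sqrt u by field_simp,
    le_div_iff₀ hs]
  constructor <;> intro h <;> nlinarith

lemma rdeArg_mono (u : ℝ) : Monotone fun t => rdeArg t u := by
  intro a b hab
  rcases le_or_gt (Real.sqrt u) 0 with h | h
  · have : Real.sqrt u = 0 := le_antisymm h (Real.sqrt_nonneg u)
    simp [rdeArg, this]
  · unfold rdeArg
    have : a / Real.sqrt u ≤ b / Real.sqrt u := by gcongr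
    linarith

lemma sqrt_le_one' {u : ℝ} (hu1 : u ≤ 1) : Real.sqrt u ≤ 1 := by
  simpa using Real.sqrt_le_sqrt hu1

lemma rdeArg_le_self {t u : ℝ} (ht : t < 0) (hu0 : 0 < u) (hu1 : u ≤ 1) : rdeArg t u ≤ t := by
  have hs : 0 < Real.sqrt u := Real.sqrt_pos.2 hu0
  have hs1 : Real.sqrt u ≤ 1 := sqrt_le_one' hu1
  have h1 : t / Real.sqrt u ≤ t := by
    rw [div_le_iff₀ hs]; nlinarith
  have : (1:ℝ) - Real.sqrt u ≥ 0 := by linarith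
  unfold rdeArg; linarith

lemma rdeArg_le {t M u : ℝ} (ht : t < 0) (hM : M < 0) (hu0 : 0 < u) (hu1 : u ≤ 1)
    (hu : u ≤ (t / M) ^ 2) : rdeArg t u ≤ M := by
  have hs : 0 < Real.sqrt u := Real.sqrt_pos.2 hu0
  have htM : 0 < t / M := div_pos_of_neg_of_neg ht hM
  have h1 : Real.sqrt u ≤ t / M := by
    calc Real.sqrt u ≤ Real.sqrt ((t / M) ^ 2) := Real.sqrt_le_sqrt hu
    _ = t / M := by rw [Real.sqrt_sq htM.le]
  have h2 : t / Real.sqrt u ≤ M := by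
    rw [div_le_iff₀ hs]
    calc t = M * (t / M) := by rw [mul_comm, div_mul_cancel₀ _ (ne_of_lt hM)]
    _ ≤ M * Real.sqrt u := mul_le_mul_of_nonpos_left h1 hM.le
  have hs1 : Real.sqrt u ≤ 1 := sqrt_le_one' hu1
  unfold rdeArg
  linarith

lemma self_le_rdeArg {t u : ℝ} (ht : 1 ≤ t) (hu0 : 0 < u) (hu1 : u ≤ 1) : t ≤ rdeArg t u := by
  have hs : 0 < Real.sqrt u := Real.sqrt_pos.2 hu0
  have hs1 : Real.sqrt u ≤ 1 := sqrt_le_one' hu1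
  have h1 : t ≤ t / Real.sqrt u := by
    rw [le_div_iff₀ hs]; nlinarith
  have e : t / Real.sqrt u * Real.sqrt u = t := div_mul_cancel₀ t (ne_of_gt hs)
  unfold rdeArg
  nlinarith [mul_nonneg (sub_nonneg.2 (ht.trans h1)) (sub_nonneg.2 hs1), e]

lemma le_rdeArg {t M u : ℝ} (ht : 1 ≤ t) (hM : 1 ≤ M) (hu0 : 0 < u)
    (hu : u ≤ (t / (M + 1)) ^ 2) : M ≤ rdeArg t u := by
  have hs : 0 < Real.sqrt u := Real.sqrt_pos.2 hu0
  have hM1 : (0:ℝ) < M + 1 := by linarith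
  have htp : (0:ℝ) < t := by linarith
  have h1 : Real.sqrt u ≤ t / (M + 1) := by
    calc Real.sqrt u ≤ Real.sqrt ((t / (M+1)) ^ 2) := Real.sqrt_le_sqrt hu
    _ = t / (M+1) := Real.sqrt_sq (div_pos htp hM1).le
  have h2 : M + 1 ≤ t / Real.sqrt u := by
    rw [le_div_iff₀ hs]
    calc (M+1) * Real.sqrt u ≤ (M+1) * (t/(M+1)) := by
          exact mul_le_mul_of_nonneg_left h1 hM1.le
    _ = t := by field_simp
  unfold rdeArg
  nlinarith [Real.sqrt_nonneg u]

lemma rdeArg_add_le {t ε u : ℝ} (hε : 0 ≤ ε) (hu0 : 0 < u) (hu1 : u ≤ 1) :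
    rdeArg t u + ε ≤ rdeArg (t + ε) u := by
  have hs : 0 < Real.sqrt u := Real.sqrt_pos.2 hu0
  have hs1 : Real.sqrt u ≤ 1 := sqrt_le_one' hu1
  have : ε ≤ ε / Real.sqrt u := by
    rw [le_div_iff₀ hs]; nlinarith
  unfold rdeArg
  rw [add_div]
  linarith

lemma unif_Icc {c : ℝ} (h0 : 0 ≤ c) (h1 : c ≤ 1) : unif (Icc 0 c) = ENNReal.ofReal c := by
  rw [unif, Measure.restrict_apply measurableSet_Icc]
  rw [Set.Icc_inter_Icc]
  simp [h1, Real.volume_Icc, max_eq_left, min_eq_left, h0]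

lemma unif_Ioc {c : ℝ} (h0 : 0 ≤ c) : unif (Ioc c 1) = ENNReal.ofReal (1 - c) := by
  rw [unif, Measure.restrict_apply measurableSet_Ioc]
  have : Ioc c 1 ∩ Icc 0 1 = Ioc c 1 := by
    apply inter_eq_left.2
    intro x hx
    exact ⟨le_trans h0 hx.1.le, hx.2⟩
  rw [this, Real.volume_Ioc]

lemma unif_Ioi : unif (Ioi 1) = 0 := by
  rw [unif, Measure.restrict_apply measurableSet_Ioi]
  have : Ioi (1:ℝ) ∩ Icc 0 1 = ∅ := by
    ext x; simp only [mem_inter_iff, mem_Ioi, mem_Icc, mem_empty_iff_false, iff_false]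
    rintro ⟨h1, _, h2⟩; linarith
  simp [this]

section Tail
variable {μ : Measure ℝ} [IsProbabilityMeasure μ]
  (hfix : Measure.map rdeMap (μ.prod unif) = μ)

include hfix

lemma tail_map_eq {s : Set ℝ} (hs : MeasurableSet s) :
    μ s = (μ.prod unif) (rdeMap ⁻¹' s) := by
  conv_lhs => rw [← hfix]
  rw [Measure.map_apply measurable_rdeMap hs]

/-- key step: μ(Iic t) ≤ μ(Iic M) for t < 0, M < 0. -/
lemma iic_le {t : ℝ} (ht : t < (0:ℝ)) {M : ℝ} (hM : M < 0) : μ (Iic t) ≤ μ (Iic M) := by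
  have htM : 0 < t / M := div_pos_of_neg_of_neg ht hM
  set c : ℝ := min ((t / M) ^ 2) 1 with hc
  have hc0 : 0 < c := lt_min (by positivity) one_pos
  have hc1 : c ≤ 1 := min_le_right _ _
  have hsub : rdeMap ⁻¹' (Iic t) ⊆
      (Iic M ×ˢ Icc 0 c) ∪ ((Iic t ×ˢ Ioc c 1) ∪ (univ ×ˢ Ioi 1)) := by
    rintro ⟨x, u⟩ hxu
    simp only [mem_preimage, mem_Iic] at hxu
    rcases le_or_gt u 0 with hu | hu
    · exfalso
      have : Real.sqrt u = 0 := Real.sqrt_eq_zero'.2 hu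
      simp only [rdeMap, this] at hxu
      linarith
    · have hx : rdeMap (x, u) ≤ t := hxu
      rcases le_or_gt u 1 with hu1 | hu1
      · have hxle : x ≤ rdeArg t u := by
          have := slice_eq (t := t) (u := u) hu
          rw [Set.ext_iff] at this
          exact (this x).1 hx
        rcases le_or_gt u c with huc | huc
        · left
          refine ⟨?_, ⟨hu.le, huc⟩⟩
          exact le_trans hxle (rdeArg_le ht hM hu hu1 (le_trans huc (min_le_left _ _)))
        · right; left
          exact ⟨le_trans hxle (rdeArg_le_self ht hu hu1), ⟨huc, hu1⟩⟩
      · right; right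
        exact ⟨trivial, hu1⟩
  have e1 : (μ.prod unif) (Iic M ×ˢ Icc 0 c) = μ (Iic M) * ENNReal.ofReal c := by
    rw [Measure.prod_prod, unif_Icc hc0.le hc1]
  have e2 : (μ.prod unif) (Iic t ×ˢ Ioc c 1) = μ (Iic t) * ENNReal.ofReal (1 - c) := by
    rw [Measure.prod_prod, unif_Ioc hc0.le]
  have e3 : (μ.prod unif) ((univ : Set ℝ) ×ˢ Ioi 1) = 0 := by
    rw [Measure.prod_prod, unif_Ioi, mul_zero]
  have key : μ (Iic t) ≤
      μ (Iic M) * ENNReal.ofReal c + (μ (Iic t) * ENNReal.ofReal (1 - c) + 0) := by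
    calc μ (Iic t) = (μ.prod unif) (rdeMap ⁻¹' (Iic t)) := tail_map_eq hfix measurableSet_Iic
      _ ≤ (μ.prod unif) ((Iic M ×ˢ Icc 0 c) ∪ ((Iic t ×ˢ Ioc c 1) ∪ (univ ×ˢ Ioi 1))) :=
          measure_mono hsub
      _ ≤ (μ.prod unif) (Iic M ×ˢ Icc 0 c) +
          ((μ.prod unif) (Iic t ×ˢ Ioc c 1) + (μ.prod unif) ((univ : Set ℝ) ×ˢ Ioi 1)) :=
          le_trans (measure_union_le _ _) (add_le_add le_rfl (measure_union_le _ _))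
      _ = _ := by rw [e1, e2, e3]
  set a := (μ (Iic t)).toReal with hadef
  set b := (μ (Iic M)).toReal with hbdef
  have ha : μ (Iic t) = ENNReal.ofReal a := (ENNReal.ofReal_toReal (measure_ne_top _ _)).symm
  have hb : μ (Iic M) = ENNReal.ofReal b := (ENNReal.ofReal_toReal (measure_ne_top _ _)).symm
  have ha0 : 0 ≤ a := ENNReal.toReal_nonneg
  have hb0 : 0 ≤ b := ENNReal.toReal_nonneg
  have h1c : (0:ℝ) ≤ 1 - c := by linarith
  rw [ha, hb, add_zero, ← ENNReal.ofReal_mul hb0, ← ENNReal.ofReal_mul ha0,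
    ← ENNReal.ofReal_add (mul_nonneg hb0 hc0.le) (mul_nonneg ha0 h1c),
    ENNReal.ofReal_le_ofReal_iff
      (add_nonneg (mul_nonneg hb0 hc0.le) (mul_nonneg ha0 h1c))] at key
  have hac : a * c ≤ b * c := by nlinarith
  have : a ≤ b := le_of_mul_le_mul_right hac hc0
  rw [ha, hb]
  exact ENNReal.ofReal_le_ofReal this

lemma ioi_le {t : ℝ} (ht : (1:ℝ) < t) {M : ℝ} (hM : 1 ≤ M) : μ (Ioi t) ≤ μ (Ioi M) := by
  have htp : (0:ℝ) < t := by linarith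
  have hM1 : (0:ℝ) < M + 1 := by linarith
  set c : ℝ := min ((t / (M + 1)) ^ 2) 1 with hc
  have hc0 : 0 < c := lt_min (by positivity) one_pos
  have hc1 : c ≤ 1 := min_le_right _ _
  have hsub : rdeMap ⁻¹' (Ioi t) ⊆
      (Ioi M ×ˢ Icc 0 c) ∪ ((Ioi t ×ˢ Ioc c 1) ∪ (univ ×ˢ Ioi 1)) := by
    rintro ⟨x, u⟩ hxu
    simp only [mem_preimage, mem_Ioi] at hxu
    rcases le_or_gt u 0 with hu | hu
    · exfalso
      have : Real.sqrt u = 0 := Real.sqrt_eq_zero'.2 hu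
      simp only [rdeMap, this] at hxu
      linarith
    · have hxgt : rdeArg t u < x := by
        by_contra hcon
        push_neg at hcon
        have := slice_eq (t := t) (u := u) hu
        rw [Set.ext_iff] at this
        have hle : rdeMap (x, u) ≤ t := (this x).2 hcon
        linarith
      rcases le_or_gt u 1 with hu1 | hu1
      · rcases le_or_gt u c with huc | huc
        · left
          refine ⟨lt_of_le_of_lt ?_ hxgt, ⟨hu.le, huc⟩⟩
          exact le_rdeArg ht.le hM hu (le_trans huc (min_le_left _ _))
        · right; left
          refine ⟨lt_of_le_of_lt ?_ hxgt, ⟨huc, hu1⟩⟩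
          exact self_le_rdeArg ht.le hu hu1
      · right; right
        exact ⟨trivial, hu1⟩
  have e1 : (μ.prod unif) (Ioi M ×ˢ Icc 0 c) = μ (Ioi M) * ENNReal.ofReal c := by
    rw [Measure.prod_prod, unif_Icc hc0.le hc1]
  have e2 : (μ.prod unif) (Ioi t ×ˢ Ioc c 1) = μ (Ioi t) * ENNReal.ofReal (1 - c) := by
    rw [Measure.prod_prod, unif_Ioc hc0.le]
  have e3 : (μ.prod unif) ((univ : Set ℝ) ×ˢ Ioi 1) = 0 := by
    rw [Measure.prod_prod, unif_Ioi, mul_zero]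
  have key : μ (Ioi t) ≤
      μ (Ioi M) * ENNReal.ofReal c + (μ (Ioi t) * ENNReal.ofReal (1 - c) + 0) := by
    calc μ (Ioi t) = (μ.prod unif) (rdeMap ⁻¹' (Ioi t)) := tail_map_eq hfix measurableSet_Ioi
      _ ≤ (μ.prod unif) ((Ioi M ×ˢ Icc 0 c) ∪ ((Ioi t ×ˢ Ioc c 1) ∪ (univ ×ˢ Ioi 1))) :=
          measure_mono hsub
      _ ≤ (μ.prod unif) (Ioi M ×ˢ Icc 0 c) +
          ((μ.prod unif) (Ioi t ×ˢ Ioc c 1) + (μ.prod unif) ((univ : Set ℝ) ×ˢ Ioi 1)) :=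
          le_trans (measure_union_le _ _) (add_le_add le_rfl (measure_union_le _ _))
      _ = _ := by rw [e1, e2, e3]
  set a := (μ (Ioi t)).toReal with hadef
  set b := (μ (Ioi M)).toReal with hbdef
  have ha : μ (Ioi t) = ENNReal.ofReal a := (ENNReal.ofReal_toReal (measure_ne_top _ _)).symm
  have hb : μ (Ioi M) = ENNReal.ofReal b := (ENNReal.ofReal_toReal (measure_ne_top _ _)).symm
  have ha0 : 0 ≤ a := ENNReal.toReal_nonneg
  have hb0 : 0 ≤ b := ENNReal.toReal_nonneg
  have h1c : (0:ℝ) ≤ 1 - c := by linarith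
  rw [ha, hb, add_zero, ← ENNReal.ofReal_mul hb0, ← ENNReal.ofReal_mul ha0,
    ← ENNReal.ofReal_add (mul_nonneg hb0 hc0.le) (mul_nonneg ha0 h1c),
    ENNReal.ofReal_le_ofReal_iff
      (add_nonneg (mul_nonneg hb0 hc0.le) (mul_nonneg ha0 h1c))] at key
  have hac : a * c ≤ b * c := by nlinarith
  have : a ≤ b := le_of_mul_le_mul_right hac hc0
  rw [ha, hb]
  exact ENNReal.ofReal_le_ofReal this

lemma tail_lower {t : ℝ} (ht : t < (0:ℝ)) : μ (Iic t) = 0 := by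
  have h1 : ∀ n : ℕ, μ (Iic t) ≤ μ (Iic (-(n+1) : ℝ)) := fun n => by
    have hn : (-(n+1) : ℝ) < 0 := by
      have : (0:ℝ) < (n:ℝ) + 1 := by positivity
      linarith
    exact iic_le hfix ht hn
  have h2 : Tendsto (fun n : ℕ => μ (Iic (-(n+1) : ℝ))) atTop
      (𝓝 (μ (⋂ n : ℕ, Iic (-(n+1) : ℝ)))) := by
    apply tendsto_measure_iInter_atTop
      (fun n => measurableSet_Iic.nullMeasurableSet)
    · intro m n hmn
      apply Iic_subset_Iic.2
      have : (m:ℝ) ≤ n := Nat.cast_le.2 hmn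
      linarith
    · exact ⟨0, measure_ne_top _ _⟩
  have hint : (⋂ n : ℕ, Iic (-(n+1) : ℝ)) = ∅ := by
    ext x
    simp only [mem_iInter, mem_Iic, mem_empty_iff_false, iff_false, not_forall, not_le]
    obtain ⟨n, hn⟩ := exists_nat_gt (-x)
    exact ⟨n, by linarith⟩
  rw [hint, measure_empty] at h2
  exact le_antisymm (ge_of_tendsto' h2 h1) zero_le

lemma tail_upper {t : ℝ} (ht : (1:ℝ) < t) : μ (Ioi t) = 0 := by
  have h1 : ∀ n : ℕ, μ (Ioi t) ≤ μ (Ioi ((n+1) : ℝ)) := fun n => by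
    have hn : (1:ℝ) ≤ (n:ℝ) + 1 := by
      have : (0:ℝ) ≤ (n:ℝ) := Nat.cast_nonneg n
      linarith
    exact ioi_le hfix ht hn
  have h2 : Tendsto (fun n : ℕ => μ (Ioi ((n+1) : ℝ))) atTop
      (𝓝 (μ (⋂ n : ℕ, Ioi ((n+1) : ℝ)))) := by
    apply tendsto_measure_iInter_atTop
      (fun n => measurableSet_Ioi.nullMeasurableSet)
    · intro m n hmn
      apply Ioi_subset_Ioi
      have : (m:ℝ) ≤ n := Nat.cast_le.2 hmn
      linarith
    · exact ⟨0, measure_ne_top _ _⟩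
  have hint : (⋂ n : ℕ, Ioi ((n+1) : ℝ)) = ∅ := by
    ext x
    simp only [mem_iInter, mem_Ioi, mem_empty_iff_false, iff_false, not_forall, not_lt]
    obtain ⟨n, hn⟩ := exists_nat_gt x
    exact ⟨n, by linarith⟩
  rw [hint, measure_empty] at h2
  exact le_antisymm (ge_of_tendsto' h2 h1) zero_le

lemma ae_mem_Icc : ∀ᵐ x ∂μ, x ∈ Icc (0:ℝ) 1 := by
  have hlow : μ (Iio 0) = 0 := by
    have : (Iio (0:ℝ)) = ⋃ n : ℕ, Iic (-(1/(n+1)) : ℝ) := by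
      ext x
      simp only [mem_Iio, mem_iUnion, mem_Iic]
      constructor
      · intro hx
        obtain ⟨n, hn⟩ := exists_nat_one_div_lt (show (0:ℝ) < -x by linarith)
        exact ⟨n, by push_cast at hn ⊢; linarith⟩
      · rintro ⟨n, hn⟩
        have : (0:ℝ) < 1/((n:ℝ)+1) := by positivity
        linarith
    rw [this]
    refine measure_iUnion_null fun n => tail_lower hfix ?_
    have : (0:ℝ) < 1/((n:ℝ)+1) := by positivity
    linarith
  have hup : μ (Ioi 1) = 0 := by
    have : (Ioi (1:ℝ)) = ⋃ n : ℕ, Ioi (1 + 1/(n+1) : ℝ) := by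
      ext x
      simp only [mem_Ioi, mem_iUnion]
      constructor
      · intro hx
        obtain ⟨n, hn⟩ := exists_nat_one_div_lt (show (0:ℝ) < x - 1 by linarith)
        exact ⟨n, by push_cast at hn ⊢; linarith⟩
      · rintro ⟨n, hn⟩
        have : (0:ℝ) < 1/((n:ℝ)+1) := by positivity
        linarith
    rw [this]
    refine measure_iUnion_null fun n => tail_upper hfix ?_
    have : (0:ℝ) < 1/((n:ℝ)+1) := by positivity
    linarith
  have : μ (Icc (0:ℝ) 1)ᶜ = 0 := by
    have hcompl : (Icc (0:ℝ) 1)ᶜ = Iio 0 ∪ Ioi 1 := by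
      ext x
      simp only [mem_compl_iff, mem_Icc, mem_union, mem_Iio, mem_Ioi, not_and_or, not_le]
    rw [hcompl]
    exact measure_union_null hlow hup
  exact this

end Tail

open ENNReal in
/-- Iterates of the CDF operator, in `ℝ≥0∞`. -/
def Fe : ℕ → ℝ → ℝ≥0∞
  | 0, t => if 1 ≤ t then 1 else 0
  | n+1, t => ∫⁻ u in Icc (0:ℝ) 1, Fe n (rdeArg t u)

lemma Fe_mono : ∀ n, Monotone (Fe n) := by
  intro n
  induction n with
  | zero =>
    intro a b hab
    simp only [Fe]
    split_ifs with h1 h2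
    · exact le_refl _
    · exact absurd (le_trans h1 hab) h2
    · exact zero_le
    · exact le_refl _
  | succ n ih =>
    intro a b hab
    simp only [Fe]
    exact lintegral_mono fun u => ih (rdeArg_mono u hab)

lemma Fe_measurable_comp (n : ℕ) (t : ℝ) :
    Measurable fun u => Fe n (rdeArg t u) :=
  (Fe_mono n).measurable.comp (measurable_rdeArg t)

lemma Fe_le_one : ∀ n t, Fe n t ≤ 1 := by
  intro n
  induction n with
  | zero => intro t; simp only [Fe]; split_ifs <;> simp
  | succ n ih =>
    intro t
    simp only [Fe]
    calc ∫⁻ u in Icc (0:ℝ) 1, Fe n (rdeArg t u) ≤ ∫⁻ _ in Icc (0:ℝ) 1, 1 :=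
      lintegral_mono fun u => ih _
    _ = 1 := by simp [Real.volume_Icc]

lemma Fe_neg : ∀ n {t : ℝ}, t < 0 → Fe n t = 0 := by
  intro n
  induction n with
  | zero => intro t ht; simp only [Fe]; rw [if_neg]; linarith
  | succ n ih =>
    intro t ht
    simp only [Fe]
    have hz : ∀ u ∈ Icc (0:ℝ) 1, Fe n (rdeArg t u) = (0:ℝ≥0∞) := by
      intro u hu
      rcases eq_or_lt_of_le hu.1 with h | h
      · have e : rdeArg t u = -1 := by
          rw [← h]
          simp [rdeArg, Real.sqrt_zero, div_zero]
        rw [e]; exact ih (by norm_num)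
      · exact ih (lt_of_le_of_lt (rdeArg_le_self ht h hu.2) ht)
    rw [setLIntegral_congr_fun measurableSet_Icc hz, lintegral_zero]

lemma ae_unif_Ioc : ∀ᵐ u ∂(volume.restrict (Icc (0:ℝ) 1)), 0 < u ∧ u ≤ 1 := by
  rw [ae_restrict_iff' measurableSet_Icc, ae_iff]
  refine measure_mono_null (fun x hx => ?_) (measure_singleton (0:ℝ))
  simp only [mem_setOf_eq, Classical.not_imp, mem_Icc, not_and_or, not_lt, not_le] at hx
  obtain ⟨⟨h0, h1⟩, h2⟩ := hx
  rcases h2 with h | h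
  · exact le_antisymm h h0
  · exact absurd h1 (not_le.2 h)

lemma Fe_one : ∀ n {t : ℝ}, 1 ≤ t → Fe n t = 1 := by
  intro n
  induction n with
  | zero => intro t ht; simp [Fe, ht]
  | succ n ih =>
    intro t ht
    simp only [Fe]
    have : ∫⁻ u in Icc (0:ℝ) 1, Fe n (rdeArg t u) = ∫⁻ _ in Icc (0:ℝ) 1, 1 := by
      apply lintegral_congr_ae
      filter_upwards [ae_unif_Ioc] with u hu
      exact ih (le_trans ht (self_le_rdeArg ht hu.1 hu.2))
    rw [this]
    simp [Real.volume_Icc]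

lemma Fe_succ_le : ∀ n t, Fe n t ≤ Fe (n+1) t := by
  intro n
  induction n with
  | zero =>
    intro t
    rcases le_or_gt 1 t with h | h
    · rw [Fe_one 0 h, Fe_one 1 h]
    · have : Fe 0 t = 0 := by simp only [Fe]; rw [if_neg]; linarith
      rw [this]; exact zero_le
  | succ n ih =>
    intro t
    simp only [Fe]
    exact lintegral_mono fun u => ih _

lemma Fe_mono_nat (t : ℝ) : Monotone fun n => Fe n t :=
  monotone_nat_of_le_succ fun n => Fe_succ_le n t

/-- The limit CDF, in `ℝ≥0∞`. -/
def Flim (t : ℝ) : ℝ≥0∞ := ⨆ n, Fe n t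

lemma Flim_le_one (t : ℝ) : Flim t ≤ 1 := iSup_le fun n => Fe_le_one n t

lemma Flim_ne_top (t : ℝ) : Flim t ≠ ⊤ := ne_top_of_le_ne_top ENNReal.one_ne_top (Flim_le_one t)

lemma Flim_mono : Monotone Flim := fun a b hab => iSup_mono fun n => Fe_mono n hab

lemma Flim_neg {t : ℝ} (ht : t < 0) : Flim t = 0 := by
  simp only [Flim]
  exact le_antisymm (iSup_le fun n => le_of_eq (Fe_neg n ht)) zero_le

lemma Flim_one {t : ℝ} (ht : 1 ≤ t) : Flim t = 1 := by
  simp only [Flim]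
  refine le_antisymm (Flim_le_one t) ?_
  exact le_trans (le_of_eq (Fe_one 0 ht).symm) (le_iSup (fun n => Fe n t) 0)

lemma Flim_fixed (t : ℝ) : Flim t = ∫⁻ u in Icc (0:ℝ) 1, Flim (rdeArg t u) := by
  have h1 : Flim t = ⨆ n, Fe (n+1) t := by
    refine le_antisymm (iSup_le fun n => le_trans (Fe_succ_le n t) (le_iSup (fun m => Fe (m+1) t) n)) ?_
    exact iSup_le fun n => le_iSup (fun m => Fe m t) (n+1)
  rw [h1]
  simp only [Fe]
  rw [← lintegral_iSup (fun n => Fe_measurable_comp n t)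
    (fun a b hab u => Fe_mono_nat (rdeArg t u) hab)]
  rfl

/-- The limit CDF, real-valued. -/
def Freal (t : ℝ) : ℝ := (Flim t).toReal

lemma Freal_mono : Monotone Freal := fun a b hab =>
  ENNReal.toReal_mono (Flim_ne_top b) (Flim_mono hab)

lemma ofReal_Freal (t : ℝ) : ENNReal.ofReal (Freal t) = Flim t :=
  ENNReal.ofReal_toReal (Flim_ne_top t)

lemma Freal_nonneg (t : ℝ) : 0 ≤ Freal t := ENNReal.toReal_nonneg

lemma Freal_le_one (t : ℝ) : Freal t ≤ 1 := by
  have := Flim_le_one t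
  rw [Freal]
  calc (Flim t).toReal ≤ (1 : ℝ≥0∞).toReal :=
    ENNReal.toReal_mono ENNReal.one_ne_top this
  _ = 1 := by simp

lemma Freal_neg {t : ℝ} (ht : t < 0) : Freal t = 0 := by
  rw [Freal, Flim_neg ht]; simp

lemma Freal_one {t : ℝ} (ht : 1 ≤ t) : Freal t = 1 := by
  rw [Freal, Flim_one ht]; simp

/-- The fixed-point CDF (right-continuous modification). -/
def Gsf : StieltjesFunction ℝ := Freal_mono.stieltjesFunction

lemma Gsf_eq (t : ℝ) : Gsf t = Function.rightLim Freal t := rfl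

lemma Freal_le_Gsf (t : ℝ) : Freal t ≤ Gsf t := Freal_mono.le_rightLim (le_refl t)

lemma Gsf_le_Freal {t s : ℝ} (h : t < s) : Gsf t ≤ Freal s := Freal_mono.rightLim_le h

lemma Gsf_neg {t : ℝ} (ht : t < 0) : Gsf t = 0 := by
  refine le_antisymm ?_ ?_
  · calc Gsf t ≤ Freal (t/2) := Gsf_le_Freal (by linarith)
    _ = 0 := Freal_neg (by linarith)
  · calc (0:ℝ) = Freal t := (Freal_neg ht).symm
    _ ≤ Gsf t := Freal_le_Gsf t

lemma Gsf_one {t : ℝ} (ht : 1 ≤ t) : Gsf t = 1 := by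
  refine le_antisymm ?_ ?_
  · calc Gsf t ≤ Freal (t+1) := Gsf_le_Freal (by linarith)
    _ ≤ 1 := Freal_le_one _
  · calc (1:ℝ) = Freal t := (Freal_one ht).symm
    _ ≤ Gsf t := Freal_le_Gsf t

lemma Gsf_tendsto_atBot : Tendsto Gsf atBot (𝓝 0) := by
  have h : Gsf =ᶠ[atBot] fun _ => (0:ℝ) := by
    filter_upwards [eventually_lt_atBot (0:ℝ)] with t ht
    exact Gsf_neg ht
  exact Tendsto.congr' h.symm tendsto_const_nhds

lemma Gsf_tendsto_atTop : Tendsto Gsf atTop (𝓝 1) := by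
  have h : Gsf =ᶠ[atTop] fun _ => (1:ℝ) := by
    filter_upwards [eventually_ge_atTop (1:ℝ)] with t ht
    exact Gsf_one ht
  exact Tendsto.congr' h.symm tendsto_const_nhds

/-- The fixed-point measure. -/
def rdeMu : Measure ℝ := Gsf.measure

instance : IsProbabilityMeasure rdeMu :=
  Gsf.isProbabilityMeasure Gsf_tendsto_atBot Gsf_tendsto_atTop

lemma rdeMu_Iic (t : ℝ) : rdeMu (Iic t) = ENNReal.ofReal (Gsf t) := by
  rw [rdeMu, Gsf.measure_Iic Gsf_tendsto_atBot]
  simp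

/-- The sequence `t + 1/(n+1)` tends to `G t` under `Freal`. -/
lemma tendsto_Freal_seq (t : ℝ) :
    Tendsto (fun n : ℕ => Freal (t + 1/(n+1))) atTop (𝓝 (Gsf t)) := by
  have h1 : Tendsto (fun n : ℕ => t + 1/((n:ℝ)+1)) atTop (𝓝[>] t) := by
    rw [tendsto_nhdsWithin_iff]
    constructor
    · have : Tendsto (fun n : ℕ => 1/((n:ℝ)+1)) atTop (𝓝 0) := tendsto_one_div_add_atTop_nhds_zero_nat
      have := this.const_add t
      simpa using this
    · filter_upwards with n
      have : (0:ℝ) < 1/((n:ℝ)+1) := by positivity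
      simp only [mem_Ioi]
      linarith
  exact (Freal_mono.tendsto_rightLim t).comp h1

lemma ae_unif_Ioc' : ∀ᵐ u ∂unif, 0 < u ∧ u ≤ 1 := ae_unif_Ioc

instance : IsProbabilityMeasure (Measure.map rdeMap (rdeMu.prod unif)) :=
  Measure.isProbabilityMeasure_map measurable_rdeMap.aemeasurable

lemma map_Iic_eq (t : ℝ) :
    (Measure.map rdeMap (rdeMu.prod unif)) (Iic t)
      = ∫⁻ u in Icc (0:ℝ) 1, ENNReal.ofReal (Gsf (rdeArg t u)) := by
  rw [Measure.map_apply measurable_rdeMap measurableSet_Iic,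
    Measure.prod_apply_symm (measurable_rdeMap measurableSet_Iic)]
  have h : ∀ᵐ u ∂unif, rdeMu ((fun x => (x, u)) ⁻¹' (rdeMap ⁻¹' Iic t))
      = ENNReal.ofReal (Gsf (rdeArg t u)) := by
    filter_upwards [ae_unif_Ioc'] with u hu
    have hset : ((fun x => (x, u)) ⁻¹' (rdeMap ⁻¹' Iic t)) = Iic (rdeArg t u) := by
      rw [← slice_eq hu.1]; rfl
    rw [hset, rdeMu_Iic]
  rw [lintegral_congr_ae h]
  rfl

lemma map_Iic_le (t : ℝ) {ε : ℝ} (hε : 0 < ε) :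
    (Measure.map rdeMap (rdeMu.prod unif)) (Iic t) ≤ ENNReal.ofReal (Freal (t + ε)) := by
  rw [map_Iic_eq]
  have hle : ∀ᵐ u ∂(volume.restrict (Icc (0:ℝ) 1)),
      ENNReal.ofReal (Gsf (rdeArg t u)) ≤ ENNReal.ofReal (Freal (rdeArg (t+ε) u)) := by
    filter_upwards [ae_unif_Ioc] with u hu
    apply ENNReal.ofReal_le_ofReal
    calc Gsf (rdeArg t u) ≤ Freal (rdeArg t u + ε) := Gsf_le_Freal (by linarith)
    _ ≤ Freal (rdeArg (t+ε) u) := Freal_mono (rdeArg_add_le hε.le hu.1 hu.2)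
  calc ∫⁻ u in Icc (0:ℝ) 1, ENNReal.ofReal (Gsf (rdeArg t u))
      ≤ ∫⁻ u in Icc (0:ℝ) 1, ENNReal.ofReal (Freal (rdeArg (t+ε) u)) := lintegral_mono_ae hle
    _ = ∫⁻ u in Icc (0:ℝ) 1, Flim (rdeArg (t+ε) u) :=
        lintegral_congr fun u => ofReal_Freal _
    _ = Flim (t+ε) := (Flim_fixed (t+ε)).symm
    _ = ENNReal.ofReal (Freal (t+ε)) := (ofReal_Freal _).symm

lemma le_map_Iic (t : ℝ) :
    ENNReal.ofReal (Freal t) ≤ (Measure.map rdeMap (rdeMu.prod unif)) (Iic t) := by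
  rw [map_Iic_eq, ofReal_Freal, Flim_fixed]
  refine lintegral_mono fun u => ?_
  rw [← ofReal_Freal]
  exact ENNReal.ofReal_le_ofReal (Freal_le_Gsf _)

lemma map_Iic (t : ℝ) :
    (Measure.map rdeMap (rdeMu.prod unif)) (Iic t) = rdeMu (Iic t) := by
  rw [rdeMu_Iic]
  have hseq : Tendsto (fun n : ℕ => ENNReal.ofReal (Freal (t + 1/(n+1)))) atTop
      (𝓝 (ENNReal.ofReal (Gsf t))) :=
    (ENNReal.continuous_ofReal.continuousAt).tendsto.comp (tendsto_Freal_seq t)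
  have hub : (Measure.map rdeMap (rdeMu.prod unif)) (Iic t) ≤ ENNReal.ofReal (Gsf t) :=
    ge_of_tendsto' hseq (fun n => map_Iic_le t (by positivity))
  have hmeas : Tendsto (fun n : ℕ => (Measure.map rdeMap (rdeMu.prod unif)) (Iic (t + 1/(n+1))))
      atTop (𝓝 ((Measure.map rdeMap (rdeMu.prod unif)) (⋂ n : ℕ, Iic (t + 1/((n:ℝ)+1))))) := by
    apply tendsto_measure_iInter_atTop (fun n => measurableSet_Iic.nullMeasurableSet)
    · intro m n hmn
      apply Iic_subset_Iic.2
      have h1 : (0:ℝ) < (m:ℝ) + 1 := by positivity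
      have h2 : (m:ℝ) + 1 ≤ (n:ℝ) + 1 := by
        have : (m:ℝ) ≤ n := Nat.cast_le.2 hmn
        linarith
      have := one_div_le_one_div_of_le h1 h2
      linarith
    · exact ⟨0, measure_ne_top _ _⟩
  have hint : (⋂ n : ℕ, Iic (t + 1/((n:ℝ)+1))) = Iic t := by
    ext x
    simp only [mem_iInter, mem_Iic]
    constructor
    · intro hx
      by_contra hcon
      push_neg at hcon
      obtain ⟨n, hn⟩ := exists_nat_one_div_lt (show (0:ℝ) < x - t by linarith)
      have := hx n
      push_cast at hn this
      linarith
    · intro hx n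
      have : (0:ℝ) < 1/((n:ℝ)+1) := by positivity
      linarith
  rw [hint] at hmeas
  have hlb : ENNReal.ofReal (Gsf t) ≤ (Measure.map rdeMap (rdeMu.prod unif)) (Iic t) :=
    le_of_tendsto_of_tendsto' hseq hmeas (fun n => le_map_Iic _)
  exact le_antisymm hub hlb

lemma rdeMu_fixed : Measure.map rdeMap (rdeMu.prod unif) = rdeMu :=
  Measure.ext_of_Iic _ _ fun t => map_Iic t

section Uniqueness

lemma lipschitz_affine (u : ℝ) : LipschitzWith (Real.toNNReal (Real.sqrt u))
    (fun x : ℝ => Real.sqrt u * x + Real.sqrt u * (1 - Real.sqrt u)) := by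
  apply LipschitzWith.of_dist_le_mul
  intro x y
  rw [Real.dist_eq, Real.dist_eq]
  have h : Real.sqrt u * x + Real.sqrt u * (1 - Real.sqrt u)
      - (Real.sqrt u * y + Real.sqrt u * (1 - Real.sqrt u)) = Real.sqrt u * (x - y) := by ring
  rw [h, abs_mul, abs_of_nonneg (Real.sqrt_nonneg u),
    Real.coe_toNNReal _ (Real.sqrt_nonneg u)]

variable {μ : Measure ℝ} [IsProbabilityMeasure μ]

lemma integrable_comp (f : ℝ → ℝ) (hf : Continuous f) (hb : ∀ x, |f x| ≤ 1) :
    Integrable (fun q : ℝ × ℝ => f (rdeMap q)) (μ.prod unif) := by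
  refine Integrable.mono' (integrable_const 1)
    ((hf.measurable.comp measurable_rdeMap).aestronglyMeasurable) ?_
  exact ae_of_all _ fun q => by simpa [Real.norm_eq_abs] using hb (rdeMap q)

lemma integral_fixed (hfix : Measure.map rdeMap (μ.prod unif) = μ)
    (f : ℝ → ℝ) (hf : Continuous f) (hb : ∀ x, |f x| ≤ 1) :
    ∫ x, f x ∂μ = ∫ u in Icc (0:ℝ) 1, (∫ x, f (rdeMap (x, u)) ∂μ) ∂volume := by
  conv_lhs => rw [← hfix]
  rw [MeasureTheory.integral_map measurable_rdeMap.aemeasurable hf.aestronglyMeasurable,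
    MeasureTheory.integral_prod_symm _ (integrable_comp f hf hb)]
  rfl

variable {ν : Measure ℝ} [IsProbabilityMeasure ν]

set_option maxHeartbeats 1200000 in
lemma contraction
    (hμ : Measure.map rdeMap (μ.prod unif) = μ) (hν : Measure.map rdeMap (ν.prod unif) = ν) :
    ∀ (n : ℕ) (L : ℝ≥0) (f : ℝ → ℝ), LipschitzWith L f → (∀ x, f x ∈ Icc (0:ℝ) 1) →
      |(∫ x, f x ∂μ) - ∫ x, f x ∂ν| ≤ L * (2/3)^n := by
  have hμs : ∀ᵐ x ∂μ, x ∈ Icc (0:ℝ) 1 := ae_mem_Icc hμ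
  have hνs : ∀ᵐ x ∂ν, x ∈ Icc (0:ℝ) 1 := ae_mem_Icc hν
  intro n
  induction n with
  | zero =>
    intro L f hL hmem
    have hfc : Continuous f := hL.continuous
    obtain ⟨x₀, hx₀, hmin'⟩ := isCompact_Icc.exists_isMinOn (nonempty_Icc.2 zero_le_one)
      hfc.continuousOn
    obtain ⟨x₁, hx₁, hmax'⟩ := isCompact_Icc.exists_isMaxOn (nonempty_Icc.2 zero_le_one)
      hfc.continuousOn
    have hmin : ∀ x ∈ Icc (0:ℝ) 1, f x₀ ≤ f x := fun x hx => hmin' hx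
    have hmax : ∀ x ∈ Icc (0:ℝ) 1, f x ≤ f x₁ := fun x hx => hmax' hx
    have hint : ∀ (ρ : Measure ℝ) [IsProbabilityMeasure ρ], (∀ᵐ x ∂ρ, x ∈ Icc (0:ℝ) 1) →
        f x₀ ≤ (∫ x, f x ∂ρ) ∧ (∫ x, f x ∂ρ) ≤ f x₁ := by
      intro ρ hρ hρs
      have hfi : Integrable f ρ := by
        refine Integrable.mono' (integrable_const 1) hfc.aestronglyMeasurable ?_
        refine ae_of_all _ fun x => ?_
        rw [Real.norm_eq_abs, abs_le]
        exact ⟨by linarith [(hmem x).1], (hmem x).2⟩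
      constructor
      · have step : (∫ _, f x₀ ∂ρ) ≤ ∫ x, f x ∂ρ := by
          refine integral_mono_ae (integrable_const _) hfi ?_
          filter_upwards [hρs] with x hx using hmin x hx
        have e : (∫ _, f x₀ ∂ρ) = f x₀ := by simp
        linarith
      · have step : (∫ x, f x ∂ρ) ≤ ∫ _, f x₁ ∂ρ := by
          refine integral_mono_ae hfi (integrable_const _) ?_
          filter_upwards [hρs] with x hx using hmax x hx
        have e : (∫ _, f x₁ ∂ρ) = f x₁ := by simp
        linarith
    obtain ⟨h1, h2⟩ := hint μ hμs
    obtain ⟨h3, h4⟩ := hint ν hνs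
    have hd : f x₁ - f x₀ ≤ L * 1 := by
      have hdist := hL.dist_le_mul x₁ x₀
      rw [Real.dist_eq, Real.dist_eq] at hdist
      have hdle : |x₁ - x₀| ≤ 1 := by
        rw [abs_le]
        constructor <;> [linarith [hx₀.2, hx₁.1]; linarith [hx₀.1, hx₁.2]]
      have hL0 : (0:ℝ) ≤ L := L.coe_nonneg
      calc f x₁ - f x₀ ≤ |f x₁ - f x₀| := le_abs_self _
      _ ≤ L * |x₁ - x₀| := hdist
      _ ≤ L * 1 := by nlinarith
    rw [pow_zero, abs_le]
    constructor <;> linarith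
  | succ n ih =>
    intro L f hL hmem
    have hfc : Continuous f := hL.continuous
    have hb : ∀ x, |f x| ≤ 1 := fun x => by
      rw [abs_le]; exact ⟨by linarith [(hmem x).1], (hmem x).2⟩
    have unif_def : unif = volume.restrict (Icc (0:ℝ) 1) := rfl
    rw [integral_fixed hμ f hfc hb, integral_fixed hν f hfc hb]
    have hAi : Integrable (fun u => ∫ x, f (rdeMap (x, u)) ∂μ)
        (volume.restrict (Icc (0:ℝ) 1)) := by
      have h := Integrable.integral_prod_right (μ := μ) (ν := unif)
        (integrable_comp f hfc hb)
      rwa [unif_def] at h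
    have hBi : Integrable (fun u => ∫ x, f (rdeMap (x, u)) ∂ν)
        (volume.restrict (Icc (0:ℝ) 1)) := by
      have h := Integrable.integral_prod_right (μ := ν) (ν := unif)
        (integrable_comp f hfc hb)
      rwa [unif_def] at h
    have hpt : ∀ u : ℝ, |(∫ x, f (rdeMap (x, u)) ∂μ) - ∫ x, f (rdeMap (x, u)) ∂ν|
        ≤ (L : ℝ) * Real.sqrt u * (2/3)^n := by
      intro u
      have h := ih (L * Real.toNNReal (Real.sqrt u)) (fun x => f (rdeMap (x, u)))
        (hL.comp (lipschitz_affine u)) (fun x => hmem _)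
      calc |(∫ x, f (rdeMap (x, u)) ∂μ) - ∫ x, f (rdeMap (x, u)) ∂ν|
          ≤ ((L * Real.toNNReal (Real.sqrt u) : ℝ≥0) : ℝ) * (2/3)^n := h
        _ = (L : ℝ) * Real.sqrt u * (2/3)^n := by
            push_cast
            rw [Real.coe_toNNReal _ (Real.sqrt_nonneg u)]
    have hsqrt_int : Integrable (fun u : ℝ => (L : ℝ) * Real.sqrt u * (2/3)^n)
        (volume.restrict (Icc (0:ℝ) 1)) := by
      apply Continuous.integrableOn_Icc
      continuity
    calc |(∫ u in Icc (0:ℝ) 1, ∫ x, f (rdeMap (x, u)) ∂μ)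
          - ∫ u in Icc (0:ℝ) 1, ∫ x, f (rdeMap (x, u)) ∂ν|
        = |∫ u in Icc (0:ℝ) 1,
            ((∫ x, f (rdeMap (x, u)) ∂μ) - ∫ x, f (rdeMap (x, u)) ∂ν)| := by
          rw [integral_sub hAi hBi]
      _ ≤ ∫ u in Icc (0:ℝ) 1,
            |(∫ x, f (rdeMap (x, u)) ∂μ) - ∫ x, f (rdeMap (x, u)) ∂ν| := by
          simpa [Real.norm_eq_abs] using norm_integral_le_integral_norm
            (μ := volume.restrict (Icc (0:ℝ) 1))
            (fun u => (∫ x, f (rdeMap (x, u)) ∂μ) - ∫ x, f (rdeMap (x, u)) ∂ν)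
      _ ≤ ∫ u in Icc (0:ℝ) 1, (L : ℝ) * Real.sqrt u * (2/3)^n :=
          integral_mono (hAi.sub hBi).abs hsqrt_int (fun u => hpt u)
      _ = (L : ℝ) * (2/3)^n * ∫ u in Icc (0:ℝ) 1, Real.sqrt u := by
          rw [← integral_const_mul]
          congr 1 with u
          ring
      _ = (L : ℝ) * (2/3)^(n+1) := by
          have hsq : ∫ u in Icc (0:ℝ) 1, Real.sqrt u = 2/3 := by
            rw [integral_Icc_eq_integral_Ioc, ← intervalIntegral.integral_of_le zero_le_one]
            have heq : ∀ u ∈ uIcc (0:ℝ) 1, Real.sqrt u = u ^ ((1:ℝ)/2) := fun u _ =>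
              Real.sqrt_eq_rpow u
            rw [intervalIntegral.integral_congr heq, integral_rpow (Or.inl (by norm_num))]
            norm_num
          rw [hsq]; ring

end Uniqueness

section Final

/-- Lipschitz approximations to the indicator of `Iic t`. -/
def clampf (t : ℝ) (k : ℕ) (x : ℝ) : ℝ := max 0 (min 1 (1 - ((k:ℝ)+1) * (x - t)))

lemma clampf_mem (t : ℝ) (k : ℕ) (x : ℝ) : clampf t k x ∈ Icc (0:ℝ) 1 :=
  ⟨le_max_left _ _, max_le zero_le_one (min_le_left _ _)⟩

lemma clampf_lipschitz (t : ℝ) (k : ℕ) : LipschitzWith ((k:ℝ≥0)+1) (clampf t k) := by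
  have h1 : LipschitzWith 1 (fun y : ℝ => max 0 (min 1 y)) := by
    apply LipschitzWith.of_dist_le_mul
    intro a b
    rw [Real.dist_eq, Real.dist_eq, NNReal.coe_one, one_mul]
    calc |max 0 (min 1 a) - max 0 (min 1 b)|
        = |max (min 1 a) 0 - max (min 1 b) 0| := by rw [max_comm (0:ℝ), max_comm (0:ℝ)]
      _ ≤ |min 1 a - min 1 b| := abs_max_sub_max_le_abs _ _ _
      _ ≤ max |1 - 1| |a - b| := abs_min_sub_min_le_max _ _ _ _
      _ = |a - b| := by rw [sub_self, abs_zero]; exact max_eq_right (abs_nonneg _)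
  have h2 : LipschitzWith ((k:ℝ≥0)+1) (fun x : ℝ => 1 - ((k:ℝ)+1) * (x - t)) := by
    apply LipschitzWith.of_dist_le_mul
    intro a b
    rw [Real.dist_eq, Real.dist_eq]
    have e : 1 - ((k:ℝ)+1) * (a - t) - (1 - ((k:ℝ)+1) * (b - t))
        = -(((k:ℝ)+1) * (a - b)) := by ring
    rw [e, abs_neg, abs_mul]
    have : |((k:ℝ)+1)| = ((k:ℝ)+1) := abs_of_nonneg (by positivity)
    rw [this]
    push_cast
    exact le_refl _
  have h3 := h1.comp h2
  rw [one_mul] at h3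
  exact h3

lemma clampf_tendsto (t x : ℝ) :
    Tendsto (fun k : ℕ => clampf t k x) atTop (𝓝 ((Iic t).indicator (1 : ℝ → ℝ) x)) := by
  rcases le_or_gt x t with hx | hx
  · have : ∀ k : ℕ, clampf t k x = 1 := by
      intro k
      have h1 : (1:ℝ) ≤ 1 - ((k:ℝ)+1) * (x - t) := by nlinarith [Nat.cast_nonneg (α := ℝ) k]
      rw [clampf, min_eq_left h1, max_eq_right zero_le_one]
    rw [indicator_of_mem (mem_Iic.2 hx)]
    simp only [Pi.one_apply]
    simpa [this] using tendsto_const_nhds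
  · rw [indicator_of_notMem (by simp [hx.not_ge])]
    have hev : ∀ᶠ k : ℕ in atTop, clampf t k x = 0 := by
      obtain ⟨N, hN⟩ := exists_nat_gt (1 / (x - t))
      filter_upwards [eventually_ge_atTop N] with k hk
      have hxt : 0 < x - t := by linarith
      have h1 : (1:ℝ) ≤ ((k:ℝ)+1) * (x - t) := by
        have hNk : (N:ℝ) ≤ k := Nat.cast_le.2 hk
        have : 1 / (x - t) ≤ (k:ℝ) + 1 := by linarith
        calc (1:ℝ) = (1/(x-t)) * (x - t) := by field_simp
        _ ≤ ((k:ℝ)+1) * (x - t) := by nlinarith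
      have h2 : 1 - ((k:ℝ)+1) * (x - t) ≤ 0 := by linarith
      have h3 : min 1 (1 - ((k:ℝ)+1) * (x - t)) ≤ 0 := le_trans (min_le_right _ _) h2
      rw [clampf, max_eq_left h3]
    exact Tendsto.congr' (EventuallyEq.symm hev) tendsto_const_nhds

lemma clampf_integral_tendsto (t : ℝ) (ρ : Measure ℝ) [IsProbabilityMeasure ρ] :
    Tendsto (fun k : ℕ => ∫ x, clampf t k x ∂ρ) atTop (𝓝 ((ρ (Iic t)).toReal)) := by
  have h := tendsto_integral_of_dominated_convergence (μ := ρ)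
    (F := fun k x => clampf t k x) (f := (Iic t).indicator (1 : ℝ → ℝ))
    (bound := fun _ => 1)
    (fun k => ((clampf_lipschitz t k).continuous).aestronglyMeasurable)
    (integrable_const 1)
    (fun k => ae_of_all _ fun x => by
      show ‖clampf t k x‖ ≤ (1:ℝ)
      rw [Real.norm_eq_abs, abs_le]
      exact ⟨by linarith [(clampf_mem t k x).1], (clampf_mem t k x).2⟩)
    (ae_of_all _ fun x => clampf_tendsto t x)
  rwa [integral_indicator_one measurableSet_Iic] at h

variable {μ ν : Measure ℝ} [IsProbabilityMeasure μ] [IsProbabilityMeasure ν]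

lemma fixed_unique
    (hμ : Measure.map rdeMap (μ.prod unif) = μ) (hν : Measure.map rdeMap (ν.prod unif) = ν) :
    μ = ν := by
  refine Measure.ext_of_Iic μ ν fun t => ?_
  have heq : ∀ k : ℕ, (∫ x, clampf t k x ∂μ) = ∫ x, clampf t k x ∂ν := by
    intro k
    have hd : ∀ n : ℕ, |(∫ x, clampf t k x ∂μ) - ∫ x, clampf t k x ∂ν|
        ≤ (((k:ℝ≥0)+1 : ℝ≥0) : ℝ) * (2/3)^n :=
      fun n => contraction hμ hν n _ _ (clampf_lipschitz t k) (clampf_mem t k)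
    have hlim : Tendsto (fun n : ℕ => (((k:ℝ≥0)+1 : ℝ≥0) : ℝ) * (2/3)^n) atTop (𝓝 0) := by
      have := tendsto_pow_atTop_nhds_zero_of_lt_one (by norm_num : (0:ℝ) ≤ 2/3)
        (by norm_num : (2:ℝ)/3 < 1)
      simpa using this.const_mul (((k:ℝ≥0)+1 : ℝ≥0) : ℝ)
    have : |(∫ x, clampf t k x ∂μ) - ∫ x, clampf t k x ∂ν| ≤ 0 :=
      ge_of_tendsto' hlim hd
    have habs := abs_nonneg ((∫ x, clampf t k x ∂μ) - ∫ x, clampf t k x ∂ν)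
    have : |(∫ x, clampf t k x ∂μ) - ∫ x, clampf t k x ∂ν| = 0 := le_antisymm this habs
    have := abs_eq_zero.1 this
    linarith [sub_eq_zero.1 this]
  have h1 := clampf_integral_tendsto t μ
  have h2 := clampf_integral_tendsto t ν
  have h2' : Tendsto (fun k : ℕ => ∫ x, clampf t k x ∂μ) atTop (𝓝 ((ν (Iic t)).toReal)) :=
    h2.congr fun k => (heq k).symm
  have htr : (μ (Iic t)).toReal = (ν (Iic t)).toReal := tendsto_nhds_unique h1 h2'
  exact (ENNReal.toReal_eq_toReal_iff' (measure_ne_top _ _) (measure_ne_top _ _)).1 htr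

end Final


/-- There is exactly one probability measure `μ` on `ℝ` such that, whenever `X` and `U` are
independent with `X ∼ μ` and `U` uniform on `[0,1]`, the random variable
`√U·X + √U·(1 − √U)` is again distributed according to `μ` (i.e. the pushforward of
`μ ⊗ unif` under `rdeMap` is `μ`). -/
theorem rde_unique_solution :
    ∃! μ : Measure ℝ,
      IsProbabilityMeasure μ ∧ Measure.map rdeMap (μ.prod unif) = μ := by
  refine ⟨rdeMu, ⟨inferInstance, rdeMu_fixed⟩, ?_⟩
  rintro ν ⟨hp, hfix⟩
  haveI := hp
  exact fixed_unique hfix rdeMu_fixed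
end
end

section
/- Let X be the solution of the recursive distributional equation X =_d √U·X + √U·(1−√U). Then the law of X has a Lebesgue density f satisfying f(t) = 0 for t < 0 or t > 1, and, for every t ∈ [0,1], f(t) = 2·∫_{p_t}^{t} g(x,t)·f(x) dx + ∫_{t}^{1} (g(x,t) − 1)·f(x) dx, where p_t := 2√t − 1 and g(x,t) := (1+x)/√((1+x)² − 4t) for x ∈ [0,1] and t < ((1+x)/2)². -/
open MeasureTheory

noncomputable section

/-- `μ` is a (probability) solution of the recursive distributional equation
`X =_d √U·X + √U·(1 − √U)` with `X, U` independent and `U` uniform on `[0,1]`. -/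
def IsRDESolution (μ : Measure ℝ) : Prop :=
  IsProbabilityMeasure μ ∧ Measure.map rdeMap (μ.prod unif) = μ

/-- The function `g(x,t) = (1+x)/√((1+x)² − 4t)`. -/
def gdens (x t : ℝ) : ℝ := (1 + x) / Real.sqrt ((1 + x) ^ 2 - 4 * t)

/-- `f` is the version of the Lebesgue density of `μ` which vanishes outside `[0,1]` and
satisfies the integral equation
`f(t) = 2·∫_{2√t−1}^{t} g(x,t)·f(x) dx + ∫_{t}^{1} (g(x,t) − 1)·f(x) dx` on `[0,1]`. -/
def IsRDEDensity (μ : Measure ℝ) (f : ℝ → ℝ) : Prop :=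
  Measurable f ∧ (∀ t, 0 ≤ f t) ∧
  μ = volume.withDensity (fun t => ENNReal.ofReal (f t)) ∧
  (∀ t : ℝ, t < 0 ∨ 1 < t → f t = 0) ∧
  ∀ t ∈ Set.Icc (0 : ℝ) 1,
    f t = 2 * (∫ x in (2 * Real.sqrt t - 1)..t, gdens x t * f x)
          + ∫ x in t..(1 : ℝ), (gdens x t - 1) * f x

namespace RDEAux
open ENNReal

lemma measurable_rdeMap : Measurable rdeMap := by
  unfold rdeMap; fun_prop

instance : IsProbabilityMeasure unif := by
  constructor
  rw [unif, Measure.restrict_apply MeasurableSet.univ, Set.univ_inter, Real.volume_Icc]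
  norm_num

lemma int_sqrt_unif : ∫ u in Set.Icc (0:ℝ) 1, Real.sqrt u = 2/3 := by
  rw [MeasureTheory.integral_Icc_eq_integral_Ioc, ← intervalIntegral.integral_of_le zero_le_one]
  simp only [Real.sqrt_eq_rpow]
  rw [integral_rpow (Or.inl (by norm_num))]
  norm_num

lemma lint_sqrt_unif : ∫⁻ u, ENNReal.ofReal (Real.sqrt u) ∂unif = ENNReal.ofReal (2/3) := by
  rw [show (unif : Measure ℝ) = volume.restrict (Set.Icc 0 1) from rfl,
    ← MeasureTheory.ofReal_integral_eq_lintegral_ofReal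
      (Real.continuous_sqrt.integrableOn_Icc) (MeasureTheory.ae_of_all _ fun u => Real.sqrt_nonneg u),
    int_sqrt_unif]

lemma unif_Icc (cc : ℝ) (h0 : 0 ≤ cc) (h1 : cc ≤ 1) : unif (Set.Icc 0 cc) = ENNReal.ofReal cc := by
  rw [unif, Measure.restrict_apply' measurableSet_Icc, Set.Icc_inter_Icc]
  simp only [max_self, min_eq_left h1]
  rw [Real.volume_Icc]; norm_num

lemma unif_Icc_compl (cc : ℝ) (h0 : 0 ≤ cc) (h1 : cc ≤ 1) :
    unif (Set.Icc 0 cc)ᶜ = ENNReal.ofReal (1 - cc) := by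
  rw [unif, Measure.restrict_apply' measurableSet_Icc]
  have : (Set.Icc 0 cc)ᶜ ∩ Set.Icc 0 1 = Set.Ioc cc 1 := by
    ext x
    simp only [Set.mem_inter_iff, Set.mem_compl_iff, Set.mem_Icc, Set.mem_Ioc, not_and, not_le]
    constructor
    · rintro ⟨h, hx0, hx1⟩; exact ⟨h hx0, hx1⟩
    · rintro ⟨h, hx1⟩; exact ⟨fun _ => h, le_trans h0 h.le, hx1⟩
  rw [this, Real.volume_Ioc]

lemma absorb (μ : Measure ℝ) (hμ : IsRDESolution μ) (B : ℝ → ℝ)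
    (hBm : Measurable B) (hB0 : ∀ x, 0 ≤ B x)
    (hrec : ∀ x : ℝ, ∀ u ∈ Set.Icc (0:ℝ) 1, B (rdeMap (x, u)) ≤ Real.sqrt u * B x) :
    μ {x | 0 < B x} = 0 := by
  obtain ⟨hprob, hfix⟩ := hμ
  set φ : ℝ → ℝ≥0∞ := fun x => min (ENNReal.ofReal (B x)) 1 with hφ
  set c : ℝ → ℝ := fun x => min 1 (1/(4 * B x ^ 2)) with hc
  set ψ : ℝ → ℝ≥0∞ := fun x =>
    min (ENNReal.ofReal (2/3 * B x)) (ENNReal.ofReal (1 - c x / 2)) with hψ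
  have hφm : Measurable φ := (hBm.ennreal_ofReal).min measurable_const
  have hcm : Measurable c := measurable_const.min
    (measurable_const.div ((hBm.pow_const 2).const_mul 4))
  have hψm : Measurable ψ := ((hBm.const_mul (2/3)).ennreal_ofReal).min
    ((measurable_const.sub (hcm.div_const 2)).ennreal_ofReal)
  have hcb : ∀ x, 0 ≤ c x ∧ c x ≤ 1 := fun x =>
    ⟨le_min (by norm_num) (by positivity), min_le_left _ _⟩
  have hψφ : ∀ x, ψ x ≤ φ x := by
    intro x
    apply le_min
    · exact (min_le_left _ _).trans (ENNReal.ofReal_le_ofReal (by nlinarith [hB0 x]))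
    · refine (min_le_right _ _).trans ?_
      rw [ENNReal.ofReal_le_one]
      nlinarith [(hcb x).1]
  have hstrict : ∀ x, 0 < B x → ψ x < φ x := by
    intro x hx
    rcases le_or_gt (B x) 1 with h1 | h1
    · have hφx : φ x = ENNReal.ofReal (B x) := min_eq_left (by
        rw [ENNReal.ofReal_le_one]; exact h1)
      rw [hφx]
      refine lt_of_le_of_lt (min_le_left _ _) ?_
      exact (ENNReal.ofReal_lt_ofReal_iff hx).2 (by nlinarith)
    · have hφx : φ x = 1 := min_eq_right (by
        rw [ENNReal.one_le_ofReal]; exact h1.le)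
      rw [hφx]
      refine lt_of_le_of_lt (min_le_right _ _) ?_
      have h4 : (0:ℝ) < 4 * B x ^ 2 := by nlinarith
      have hc0 : 0 < c x := lt_min one_pos (by positivity)
      calc ENNReal.ofReal (1 - c x / 2) < ENNReal.ofReal 1 :=
            (ENNReal.ofReal_lt_ofReal_iff one_pos).2 (by linarith)
        _ = 1 := ENNReal.ofReal_one
  have step1 : ∫⁻ x, φ x ∂μ = ∫⁻ p, φ (rdeMap p) ∂(μ.prod unif) := by
    conv_lhs => rw [← hfix]
    rw [lintegral_map hφm measurable_rdeMap]
  have step2 : ∫⁻ p, φ (rdeMap p) ∂(μ.prod unif) = ∫⁻ x, ∫⁻ u, φ (rdeMap (x, u)) ∂unif ∂μ :=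
    lintegral_prod _ ((hφm.comp measurable_rdeMap).aemeasurable)
  have hmem : ∀ᵐ u ∂unif, u ∈ Set.Icc (0:ℝ) 1 := ae_restrict_mem measurableSet_Icc
  have inner : ∀ x, ∫⁻ u, φ (rdeMap (x, u)) ∂unif ≤ ψ x := by
    intro x
    have mono : ∫⁻ u, φ (rdeMap (x, u)) ∂unif
        ≤ ∫⁻ u, min (ENNReal.ofReal (Real.sqrt u * B x)) 1 ∂unif := by
      refine lintegral_mono_ae (hmem.mono fun u hu => ?_)
      exact min_le_min (ENNReal.ofReal_le_ofReal (hrec x u hu)) le_rfl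
    refine mono.trans (le_min ?_ ?_)
    · calc ∫⁻ u, min (ENNReal.ofReal (Real.sqrt u * B x)) 1 ∂unif
          ≤ ∫⁻ u, ENNReal.ofReal (Real.sqrt u) * ENNReal.ofReal (B x) ∂unif := by
            refine lintegral_mono fun u => (min_le_left _ _).trans ?_
            rw [← ENNReal.ofReal_mul (Real.sqrt_nonneg u)]
        _ = (∫⁻ u, ENNReal.ofReal (Real.sqrt u) ∂unif) * ENNReal.ofReal (B x) :=
            lintegral_mul_const _ (Real.continuous_sqrt.measurable.ennreal_ofReal)
        _ = ENNReal.ofReal (2/3) * ENNReal.ofReal (B x) := by rw [lint_sqrt_unif]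
        _ = ENNReal.ofReal (2/3 * B x) := (ENNReal.ofReal_mul (by norm_num)).symm
    · have hcc0 : 0 ≤ c x := (hcb x).1
      have hcc1 : c x ≤ 1 := (hcb x).2
      have hpt : ∀ u ∈ Set.Icc (0:ℝ) 1, min (ENNReal.ofReal (Real.sqrt u * B x)) 1
          ≤ (Set.Icc (0:ℝ) (c x)).indicator (fun _ => (ENNReal.ofReal (1/2))) u
            + (Set.Icc (0:ℝ) (c x))ᶜ.indicator (fun _ => 1) u := by
        intro u hu
        by_cases h : u ∈ Set.Icc (0:ℝ) (c x)
        · rw [Set.indicator_of_mem h, Set.indicator_of_notMem (by simpa using h)]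
          have hb : Real.sqrt u * B x ≤ 1/2 := by
            rcases eq_or_lt_of_le (hB0 x) with h0 | h0
            · rw [← h0]; norm_num
            · have hu' : u ≤ 1/(4 * B x ^ 2) := le_trans h.2 (min_le_right _ _)
              have hsq : Real.sqrt u ≤ Real.sqrt (1/(4 * B x ^ 2)) := Real.sqrt_le_sqrt hu'
              have hs : Real.sqrt (1/(4 * B x ^ 2)) = 1/(2 * B x) := by
                rw [show 1/(4 * B x ^ 2) = (1/(2 * B x))^2 by field_simp; ring,
                  Real.sqrt_sq (by positivity)]
              rw [hs] at hsq
              have h2 : Real.sqrt u * B x ≤ (1/(2 * B x)) * B x :=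
                mul_le_mul_of_nonneg_right hsq h0.le
              calc Real.sqrt u * B x ≤ (1/(2 * B x)) * B x := h2
                _ = 1/2 := by field_simp
          rw [add_zero]
          exact (min_le_left _ _).trans (ENNReal.ofReal_le_ofReal hb)
        · rw [Set.indicator_of_notMem h, Set.indicator_of_mem (by simpa using h)]
          rw [zero_add]
          exact min_le_right _ _
      calc ∫⁻ u, min (ENNReal.ofReal (Real.sqrt u * B x)) 1 ∂unif
          ≤ ∫⁻ u, ((Set.Icc (0:ℝ) (c x)).indicator (fun _ => (ENNReal.ofReal (1/2))) u
            + (Set.Icc (0:ℝ) (c x))ᶜ.indicator (fun _ => 1) u) ∂unif :=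
            lintegral_mono_ae (hmem.mono hpt)
        _ = ENNReal.ofReal (1/2) * unif (Set.Icc 0 (c x)) + unif (Set.Icc (0:ℝ) (c x))ᶜ := by
            rw [lintegral_add_left ((measurable_const.indicator measurableSet_Icc))]
            rw [lintegral_indicator measurableSet_Icc, lintegral_indicator measurableSet_Icc.compl]
            simp [mul_comm]
        _ = ENNReal.ofReal (1/2) * ENNReal.ofReal (c x) + ENNReal.ofReal (1 - c x) := by
            rw [unif_Icc _ hcc0 hcc1, unif_Icc_compl _ hcc0 hcc1]
        _ = ENNReal.ofReal (1 - c x / 2) := by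
            rw [← ENNReal.ofReal_mul (by norm_num), ← ENNReal.ofReal_add (by positivity) (by linarith)]
            ring_nf
  have hint : ∫⁻ x, φ x ∂μ ≤ ∫⁻ x, ψ x ∂μ := by
    rw [step1, step2]; exact lintegral_mono inner
  have hfin : ∫⁻ x, ψ x ∂μ ≠ ⊤ := by
    refine ne_of_lt (lt_of_le_of_lt
      (lintegral_mono fun x => (hψφ x).trans (min_le_right _ _)) ?_)
    rw [lintegral_const]
    simp
  have heq : ∫⁻ x, φ x - ψ x ∂μ = 0 := by
    rw [lintegral_sub hψm hfin (ae_of_all _ hψφ)]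
    exact tsub_eq_zero_of_le hint
  have hae : ∀ᵐ x ∂μ, φ x - ψ x = 0 := (lintegral_eq_zero_iff (hφm.sub hψm)).1 heq
  have hsub : {x | 0 < B x} ⊆ {x | ¬ (φ x - ψ x = 0)} := by
    intro x hx h0
    rw [tsub_eq_zero_iff_le] at h0
    exact absurd h0 (not_le.2 (hstrict x hx))
  refine measure_mono_null hsub ?_
  exact ae_iff.1 hae

lemma supp_subset (μ : Measure ℝ) (hμ : IsRDESolution μ) : μ (Set.Icc (0:ℝ) 1)ᶜ = 0 := by
  have h1 : μ {x : ℝ | 0 < max (x - 1) 0} = 0 := by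
    apply absorb μ hμ _ (by fun_prop) (fun x => le_max_right _ _)
    intro x u hu
    have hv0 : 0 ≤ Real.sqrt u := Real.sqrt_nonneg u
    have hY : rdeMap (x, u) - 1 = Real.sqrt u * (x - 1) - (1 - Real.sqrt u)^2 := by
      simp only [rdeMap]; ring
    apply max_le
    · nlinarith [le_max_left (x-1) (0:ℝ), sq_nonneg (1 - Real.sqrt u), le_max_right (x-1) (0:ℝ)]
    · positivity
  have h2 : μ {x : ℝ | 0 < max (-x) 0} = 0 := by
    apply absorb μ hμ _ (by fun_prop) (fun x => le_max_right _ _)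
    intro x u hu
    have hv0 : 0 ≤ Real.sqrt u := Real.sqrt_nonneg u
    have hv1 : Real.sqrt u ≤ 1 := by
      rw [show (1:ℝ) = Real.sqrt 1 by simp]
      exact Real.sqrt_le_sqrt hu.2
    have hY : -rdeMap (x, u) = Real.sqrt u * (-x) + Real.sqrt u * (Real.sqrt u - 1) := by
      simp only [rdeMap]; ring
    apply max_le
    · nlinarith [le_max_left (-x) (0:ℝ), le_max_right (-x) (0:ℝ)]
    · positivity
  refine measure_mono_null (t := {x : ℝ | 0 < max (-x) 0} ∪ {x : ℝ | 0 < max (x-1) 0}) ?_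
    (measure_union_null h2 h1)
  intro x hx
  simp only [Set.mem_compl_iff, Set.mem_Icc, not_and_or, not_le] at hx
  rcases hx with hx | hx
  · left; simp only [Set.mem_setOf_eq, lt_max_iff]; left; linarith
  · right; simp only [Set.mem_setOf_eq, lt_max_iff]; left; linarith




/-- transition density -/
def kdens (x t : ℝ) : ℝ :=
  if 0 ≤ t ∧ x ≤ t ∧ 4*t < (1+x)^2 then 2 * gdens x t
  else if 0 ≤ t ∧ t < x then gdens x t - 1 else 0

def kE (x t : ℝ) : ℝ≥0∞ := ENNReal.ofReal (kdens x t)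

def vmin (x t : ℝ) : ℝ := ((1+x) - Real.sqrt ((1+x)^2 - 4*t))/2
def vmax (x t : ℝ) : ℝ := ((1+x) + Real.sqrt ((1+x)^2 - 4*t))/2

/-- CDF of the transition kernel -/
def Hcdf (x t : ℝ) : ℝ :=
  if t < 0 then 0
  else if t < x then vmin x t ^ 2
  else if 4*t < (1+x)^2 then vmin x t ^ 2 + 1 - vmax x t ^ 2
  else 1

lemma kdens_neg (x t : ℝ) (ht : t < 0) : kdens x t = 0 := by
  rw [kdens, if_neg (by push_neg; intro h; linarith), if_neg (by push_neg; intro h; linarith)]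

lemma kdens_big (x t : ℝ) (ht : (1+x)^2 ≤ 4*t) : kdens x t = 0 := by
  have h4x : 4*x ≤ (1+x)^2 := by nlinarith [sq_nonneg (1-x)]
  rw [kdens, if_neg (by push_neg; intro _ _; linarith), if_neg (by push_neg; intro _; linarith)]

lemma measurable_gdens : Measurable (fun p : ℝ × ℝ => gdens p.1 p.2) := by
  apply Measurable.div
  · exact measurable_const.add measurable_fst
  · exact Real.continuous_sqrt.measurable.comp
      (((measurable_const.add measurable_fst).pow_const 2).sub (measurable_snd.const_mul 4))

lemma measurable_kdens : Measurable (Function.uncurry kdens) := by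
  have hg : Measurable (fun p : ℝ × ℝ => gdens p.1 p.2) := measurable_gdens
  have hs1 : MeasurableSet {p : ℝ × ℝ | 0 ≤ p.2 ∧ p.1 ≤ p.2 ∧ 4*p.2 < (1+p.1)^2} := by
    refine MeasurableSet.inter ?_ (MeasurableSet.inter ?_ ?_)
    · exact measurableSet_le measurable_const measurable_snd
    · exact measurableSet_le measurable_fst measurable_snd
    · exact measurableSet_lt (measurable_snd.const_mul 4)
        ((measurable_const.add measurable_fst).pow_const 2)
  have hs2 : MeasurableSet {p : ℝ × ℝ | 0 ≤ p.2 ∧ p.2 < p.1} := by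
    exact (measurableSet_le measurable_const measurable_snd).inter
      (measurableSet_lt measurable_snd measurable_fst)
  exact Measurable.ite hs1 (hg.const_mul 2) (Measurable.ite hs2 (hg.sub measurable_const)
    measurable_const)

lemma measurable_kE : Measurable (fun p : ℝ × ℝ => kE p.1 p.2) :=
  measurable_kdens.ennreal_ofReal

/- derivative lemmas -/
lemma hasDerivAt_vmin (x t : ℝ) (h : 0 < (1+x)^2 - 4*t) :
    HasDerivAt (fun s => vmin x s) (1 / Real.sqrt ((1+x)^2 - 4*t)) t := by
  have hσ : 0 < Real.sqrt ((1+x)^2 - 4*t) := Real.sqrt_pos.2 h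
  have h1 : HasDerivAt (fun s : ℝ => (1+x)^2 - 4*s) (-4) t := by
    simpa using (HasDerivAt.const_sub ((1+x)^2) ((hasDerivAt_id t).const_mul (4:ℝ)))
  have h2 : HasDerivAt (fun s : ℝ => Real.sqrt ((1+x)^2 - 4*s))
      (1 / (2 * Real.sqrt ((1+x)^2 - 4*t)) * (-4)) t :=
    (Real.hasDerivAt_sqrt (ne_of_gt h)).comp t h1
  have h3 := (h2.const_sub (1+x)).div_const 2
  refine h3.congr_deriv ?_
  field_simp
  ring

lemma hasDerivAt_vmax (x t : ℝ) (h : 0 < (1+x)^2 - 4*t) :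
    HasDerivAt (fun s => vmax x s) (-(1 / Real.sqrt ((1+x)^2 - 4*t))) t := by
  have hσ : 0 < Real.sqrt ((1+x)^2 - 4*t) := Real.sqrt_pos.2 h
  have h1 : HasDerivAt (fun s : ℝ => (1+x)^2 - 4*s) (-4) t := by
    simpa using (HasDerivAt.const_sub ((1+x)^2) ((hasDerivAt_id t).const_mul (4:ℝ)))
  have h2 : HasDerivAt (fun s : ℝ => Real.sqrt ((1+x)^2 - 4*s))
      (1 / (2 * Real.sqrt ((1+x)^2 - 4*t)) * (-4)) t :=
    (Real.hasDerivAt_sqrt (ne_of_gt h)).comp t h1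
  have h3 := (h2.const_add (1+x)).div_const 2
  refine h3.congr_deriv ?_
  field_simp
  ring

lemma hasDerivAt_vmin_sq (x t : ℝ) (h : 0 < (1+x)^2 - 4*t) :
    HasDerivAt (fun s => vmin x s ^ 2) (gdens x t - 1) t := by
  have hσ : 0 < Real.sqrt ((1+x)^2 - 4*t) := Real.sqrt_pos.2 h
  have h1 := (hasDerivAt_vmin x t h).pow 2
  refine h1.congr_deriv ?_
  have hsq : Real.sqrt ((1+x)^2 - 4*t) ^ 2 = (1+x)^2 - 4*t := Real.sq_sqrt h.le
  rw [gdens, vmin]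
  field_simp
  simp only [Nat.reduceSub, Nat.cast_ofNat, pow_one]
  ring

lemma hasDerivAt_W (x t : ℝ) (h : 0 < (1+x)^2 - 4*t) :
    HasDerivAt (fun s => vmin x s ^ 2 + 1 - vmax x s ^ 2) (2 * gdens x t) t := by
  have hσ : 0 < Real.sqrt ((1+x)^2 - 4*t) := Real.sqrt_pos.2 h
  have h1 := ((hasDerivAt_vmin x t h).pow 2).add_const 1
  have h2 := (hasDerivAt_vmax x t h).pow 2
  have h3 := h1.sub h2
  refine h3.congr_deriv ?_
  rw [gdens, vmin, vmax]
  field_simp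
  ring

lemma continuous_vmin (x : ℝ) : Continuous (fun s => vmin x s) := by
  unfold vmin; fun_prop

lemma continuous_vmax (x : ℝ) : Continuous (fun s => vmax x s) := by
  unfold vmax; fun_prop

/- integrability -/
lemma intInt_aux (x a b : ℝ) :
    IntervalIntegrable (fun s => ((1+x)^2 - 4*s) ^ (-(1/2) : ℝ)) volume a b := by
  have h0 : IntervalIntegrable (fun y : ℝ => y ^ (-(1/2) : ℝ)) volume
      ((1+x)^2 - 4*a) ((1+x)^2 - 4*b) :=
    intervalIntegral.intervalIntegrable_rpow' (by norm_num)
  have h1 := h0.comp_sub_left ((1+x)^2)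
  have h2 := h1.comp_mul_left (c := 4)
  have e1 : (1+x)^2 - ((1+x)^2 - 4*a) = 4*a := by ring
  have e2 : (1+x)^2 - ((1+x)^2 - 4*b) = 4*b := by ring
  rw [e1, e2] at h2
  have e3 : 4*a/4 = a := by ring
  have e4 : 4*b/4 = b := by ring
  rw [e3, e4] at h2
  exact h2

lemma intInt_gdens (x a b : ℝ) (hx0 : 0 ≤ x) (ha : 0 ≤ a) (hab : a ≤ b)
    (hb : 4*b ≤ (1+x)^2) : IntervalIntegrable (fun s => gdens x s) volume a b := by
  have h0 := (intInt_aux x a b).const_mul (1+x)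
  rw [intervalIntegrable_iff_integrableOn_Ioc_of_le hab] at h0 ⊢
  refine h0.congr_fun (fun s hs => ?_) measurableSet_Ioc
  obtain ⟨hs1, hs2⟩ := hs
  have harg : 0 ≤ (1+x)^2 - 4*s := by linarith
  rw [gdens, Real.sqrt_eq_rpow]
  beta_reduce
  rw [Real.rpow_neg harg, ← div_eq_mul_inv]

/- FTC lemmas -/
lemma integral_gm1 (x a b : ℝ) (hx0 : 0 ≤ x) (ha : 0 ≤ a) (hab : a ≤ b)
    (hb : 4*b ≤ (1+x)^2) :
    ∫ s in a..b, (gdens x s - 1) = vmin x b ^ 2 - vmin x a ^ 2 := by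
  refine intervalIntegral.integral_eq_sub_of_hasDeriv_right_of_le hab
    (((continuous_vmin x).pow 2).continuousOn) (fun s hs => ?_)
    ((intInt_gdens x a b hx0 ha hab hb).sub intervalIntegrable_const)
  have h : 0 < (1+x)^2 - 4*s := by
    obtain ⟨h1, h2⟩ := hs
    linarith
  exact (hasDerivAt_vmin_sq x s h).hasDerivWithinAt

lemma integral_2g (x a b : ℝ) (hx0 : 0 ≤ x) (ha : 0 ≤ a) (hab : a ≤ b)
    (hb : 4*b ≤ (1+x)^2) :
    ∫ s in a..b, 2 * gdens x s =
      (vmin x b ^ 2 + 1 - vmax x b ^ 2) - (vmin x a ^ 2 + 1 - vmax x a ^ 2) := by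
  refine intervalIntegral.integral_eq_sub_of_hasDeriv_right_of_le hab
    (((((continuous_vmin x).pow 2).add continuous_const).sub
      ((continuous_vmax x).pow 2)).continuousOn) (fun s hs => ?_)
    ((intInt_gdens x a b hx0 ha hab hb).const_mul 2)
  have h : 0 < (1+x)^2 - 4*s := by
    obtain ⟨h1, h2⟩ := hs
    linarith
  exact (hasDerivAt_W x s h).hasDerivWithinAt

/- special values -/
lemma vmin_zero (x : ℝ) (hx0 : 0 ≤ x) : vmin x 0 = 0 := by
  rw [vmin]
  rw [show (1+x)^2 - 4*0 = (1+x)^2 by ring, Real.sqrt_sq (by linarith)]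
  ring

lemma sqrt_self_arg (x : ℝ) (hx1 : x ≤ 1) : Real.sqrt ((1+x)^2 - 4*x) = 1 - x := by
  rw [show (1+x)^2 - 4*x = (1-x)^2 by ring, Real.sqrt_sq (by linarith)]

lemma vmin_self (x : ℝ) (hx1 : x ≤ 1) : vmin x x = x := by
  rw [vmin, sqrt_self_arg x hx1]; ring

lemma vmax_self (x : ℝ) (hx1 : x ≤ 1) : vmax x x = 1 := by
  rw [vmax, sqrt_self_arg x hx1]; ring

lemma vm_top (x : ℝ) (hx0 : 0 ≤ x) :
    vmin x ((1+x)^2/4) = (1+x)/2 ∧ vmax x ((1+x)^2/4) = (1+x)/2 := by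
  have h : (1+x)^2 - 4*((1+x)^2/4) = 0 := by ring
  constructor <;> [rw [vmin]; rw [vmax]] <;> rw [h, Real.sqrt_zero] <;> ring

/- pointwise nonnegativity of gdens - 1 -/
lemma gdens_ge_one (x s : ℝ) (hx0 : 0 ≤ x) (hs0 : 0 ≤ s) (h : 0 < (1+x)^2 - 4*s) :
    1 ≤ gdens x s := by
  have hσ : 0 < Real.sqrt ((1+x)^2 - 4*s) := Real.sqrt_pos.2 h
  rw [gdens, le_div_iff₀ hσ, one_mul]
  calc Real.sqrt ((1+x)^2 - 4*s) ≤ Real.sqrt ((1+x)^2) := Real.sqrt_le_sqrt (by linarith)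
    _ = 1 + x := Real.sqrt_sq (by linarith)

lemma gdens_nonneg (x s : ℝ) (hx : -1 ≤ x) : 0 ≤ gdens x s :=
  div_nonneg (by linarith) (Real.sqrt_nonneg _)

end RDEAux

namespace RDEAux2
open RDEAux ENNReal

lemma lint_Ico_low (x b : ℝ) (hx0 : 0 ≤ x) (hx1 : x ≤ 1) (hb0 : 0 ≤ b) (hbx : b ≤ x) :
    ∫⁻ s in Set.Ico 0 b, kE x s = ENNReal.ofReal (vmin x b ^ 2) := by
  have h4 : 4*b ≤ (1+x)^2 := by nlinarith [sq_nonneg (1-x)]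
  have hcong : ∀ s ∈ Set.Ico (0:ℝ) b, kE x s = ENNReal.ofReal (gdens x s - 1) := by
    intro s hs
    obtain ⟨hs0, hsb⟩ := hs
    have hsx : s < x := lt_of_lt_of_le hsb hbx
    rw [kE, kdens, if_neg (by push_neg; intro _ hxs; exfalso; linarith), if_pos ⟨hs0, hsx⟩]
  rw [setLIntegral_congr_fun measurableSet_Ico hcong]
  have hInt : IntegrableOn (fun s => gdens x s - 1) (Set.Ico 0 b) volume := by
    have h1 : IntervalIntegrable (fun s => gdens x s - 1) volume 0 b :=
      (intInt_gdens x 0 b hx0 le_rfl hb0 h4).sub intervalIntegrable_const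
    rw [intervalIntegrable_iff_integrableOn_Ioc_of_le hb0] at h1
    exact ((integrableOn_Icc_iff_integrableOn_Ioc (f := fun s => gdens x s - 1)).2 h1).mono_set Set.Ico_subset_Icc_self
  have hnn : ∀ s ∈ Set.Ico (0:ℝ) b, 0 ≤ gdens x s - 1 := by
    intro s hs
    obtain ⟨hs0, hsb⟩ := hs
    have hsx : s < x := lt_of_lt_of_le hsb hbx
    have harg : 0 < (1+x)^2 - 4*s := by nlinarith [sq_nonneg (1-x)]
    linarith [gdens_ge_one x s hx0 hs0 harg]
  rw [← ofReal_integral_eq_lintegral_ofReal hInt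
    ((ae_restrict_mem measurableSet_Ico).mono hnn)]
  congr 1
  rw [MeasureTheory.setIntegral_congr_set MeasureTheory.Ico_ae_eq_Ioc,
    ← intervalIntegral.integral_of_le hb0,
    integral_gm1 x 0 b hx0 le_rfl hb0 h4, vmin_zero x hx0]
  ring

lemma lint_Ico_mid (x b : ℝ) (hx0 : 0 ≤ x) (hx1 : x ≤ 1) (hxb : x ≤ b)
    (hb : 4*b ≤ (1+x)^2) :
    ∫⁻ s in Set.Ico x b, kE x s
      = ENNReal.ofReal (vmin x b ^ 2 + 1 - vmax x b ^ 2 - x ^ 2) := by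
  have hcong : ∀ s ∈ Set.Ico x b, kE x s = ENNReal.ofReal (2 * gdens x s) := by
    intro s hs
    obtain ⟨hs1, hs2⟩ := hs
    rw [kE, kdens, if_pos ⟨le_trans hx0 hs1, hs1, by linarith⟩]
  rw [setLIntegral_congr_fun measurableSet_Ico hcong]
  have hInt : IntegrableOn (fun s => 2 * gdens x s) (Set.Ico x b) volume := by
    have h1 : IntervalIntegrable (fun s => 2 * gdens x s) volume x b := by
      simpa [mul_comm] using (intInt_gdens x x b hx0 hx0 hxb hb).const_mul 2
    rw [intervalIntegrable_iff_integrableOn_Ioc_of_le hxb] at h1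
    exact ((integrableOn_Icc_iff_integrableOn_Ioc (f := fun s => 2 * gdens x s)).2 h1).mono_set Set.Ico_subset_Icc_self
  have hnn : ∀ s ∈ Set.Ico x b, 0 ≤ 2 * gdens x s := by
    intro s _
    have := gdens_nonneg x s (by linarith)
    linarith
  rw [← ofReal_integral_eq_lintegral_ofReal hInt
    ((ae_restrict_mem measurableSet_Ico).mono hnn)]
  congr 1
  rw [MeasureTheory.setIntegral_congr_set MeasureTheory.Ico_ae_eq_Ioc,
    ← intervalIntegral.integral_of_le hxb,
    integral_2g x x b hx0 hx0 hxb hb, vmin_self x hx1, vmax_self x hx1]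
  ring

lemma W_mono (x b : ℝ) (hx0 : 0 ≤ x) (hx1 : x ≤ 1) (hxb : x ≤ b)
    (hb : 4*b ≤ (1+x)^2) :
    x ^ 2 ≤ vmin x b ^ 2 + 1 - vmax x b ^ 2 := by
  have h := intervalIntegral.integral_nonneg (f := fun s => 2 * gdens x s) (μ := volume) hxb
    (fun s _ => by show (0:ℝ) ≤ 2 * gdens x s
                   have := gdens_nonneg x s (by linarith); linarith)
  rw [integral_2g x x b hx0 hx0 hxb hb, vmin_self x hx1, vmax_self x hx1] at h
  linarith

lemma L1 (x t : ℝ) (hx0 : 0 ≤ x) (hx1 : x ≤ 1) :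
    ∫⁻ s in Set.Iic t, kE x s = ENNReal.ofReal (Hcdf x t) := by
  have h4x : 4*x ≤ (1+x)^2 := by nlinarith [sq_nonneg (1-x)]
  rcases lt_or_ge t 0 with ht | ht0
  · rw [Hcdf, if_pos ht]
    rw [setLIntegral_congr_fun measurableSet_Iic
      (fun s (hs : s ≤ t) => by
        rw [kE, kdens_neg x s (lt_of_le_of_lt hs ht)])]
    simp
  have hIic : ∫⁻ s in Set.Iic t, kE x s = ∫⁻ s in Set.Icc 0 t, kE x s := by
    have hset : Set.Iic t = Set.Iio 0 ∪ Set.Icc 0 t := by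
      ext s; simp only [Set.mem_Iic, Set.mem_union, Set.mem_Iio, Set.mem_Icc]
      constructor
      · intro h; rcases lt_or_ge s 0 with h'|h'; exacts [Or.inl h', Or.inr ⟨h', h⟩]
      · rintro (h|⟨h1,h2⟩); exacts [le_trans h.le ht0, h2]
    rw [hset, lintegral_union measurableSet_Icc (by
      rw [Set.disjoint_left]; rintro s (hs : s < 0) ⟨h1, _⟩; linarith)]
    have hz : ∫⁻ s in Set.Iio 0, kE x s = 0 := by
      rw [setLIntegral_congr_fun measurableSet_Iio
        (fun s (hs : s < 0) => by rw [kE, kdens_neg x s hs])]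
      simp
    rw [hz, zero_add]
  rw [hIic]
  rcases lt_or_ge t x with htx | hxt
  · -- 0 ≤ t < x
    rw [MeasureTheory.setLIntegral_congr (MeasureTheory.Ico_ae_eq_Icc (μ := volume) (a := 0) (b := t)).symm]
    rw [lint_Ico_low x t hx0 hx1 ht0 htx.le, Hcdf, if_neg (not_lt.2 ht0), if_pos htx]
  rcases lt_or_ge (4*t) ((1+x)^2) with htm | hmt
  · -- x ≤ t, 4t < (1+x)^2
    have hset : Set.Icc 0 t = Set.Ico 0 x ∪ Set.Icc x t := by
      ext s; simp only [Set.mem_Icc, Set.mem_union, Set.mem_Ico]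
      constructor
      · rintro ⟨h1, h2⟩
        rcases lt_or_ge s x with h'|h'; exacts [Or.inl ⟨h1, h'⟩, Or.inr ⟨h', h2⟩]
      · rintro (⟨h1,h2⟩|⟨h1,h2⟩)
        exacts [⟨h1, le_trans h2.le hxt⟩, ⟨le_trans hx0 h1, h2⟩]
    rw [hset, lintegral_union measurableSet_Icc (by
      rw [Set.disjoint_left]; rintro s ⟨_, hs⟩ ⟨h1, _⟩; linarith)]
    rw [lint_Ico_low x x hx0 hx1 hx0 le_rfl, vmin_self x hx1]
    rw [MeasureTheory.setLIntegral_congr (MeasureTheory.Ico_ae_eq_Icc (μ := volume) (a := x) (b := t)).symm]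
    rw [lint_Ico_mid x t hx0 hx1 hxt htm.le]
    rw [← ENNReal.ofReal_add (by positivity) (by
      have := W_mono x t hx0 hx1 hxt htm.le; linarith)]
    rw [Hcdf, if_neg (not_lt.2 ht0), if_neg (not_lt.2 hxt), if_pos htm]
    congr 1
    ring
  · -- (1+x)^2 ≤ 4t
    have hxm : x ≤ (1+x)^2/4 := by linarith
    have hmt2 : (1+x)^2/4 ≤ t := by linarith
    have hset : Set.Icc 0 t = Set.Ico 0 x ∪ Set.Ico x ((1+x)^2/4) ∪ Set.Icc ((1+x)^2/4) t := by
      ext s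
      simp only [Set.mem_Icc, Set.mem_union, Set.mem_Ico]
      constructor
      · rintro ⟨h1, h2⟩
        rcases lt_or_ge s x with h'|h'
        · exact Or.inl (Or.inl ⟨h1, h'⟩)
        rcases lt_or_ge s ((1+x)^2/4) with h''|h''
        · exact Or.inl (Or.inr ⟨h', h''⟩)
        · exact Or.inr ⟨h'', h2⟩
      · rintro ((⟨h1,h2⟩|⟨h1,h2⟩)|⟨h1,h2⟩)
        · exact ⟨h1, le_trans h2.le (le_trans hxm hmt2)⟩
        · exact ⟨le_trans hx0 h1, le_trans h2.le hmt2⟩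
        · exact ⟨le_trans (le_trans hx0 hxm) h1, h2⟩
    rw [hset, lintegral_union measurableSet_Icc (by
      rw [Set.disjoint_left]
      rintro s (⟨_, hs⟩|⟨_, hs⟩) ⟨h1, _⟩ <;> linarith),
      lintegral_union measurableSet_Ico (by
      rw [Set.disjoint_left]; rintro s ⟨_, hs⟩ ⟨h1, _⟩; linarith)]
    rw [lint_Ico_low x x hx0 hx1 hx0 le_rfl, vmin_self x hx1]
    rw [lint_Ico_mid x ((1+x)^2/4) hx0 hx1 hxm (by linarith)]
    have hz : ∫⁻ s in Set.Icc ((1+x)^2/4) t, kE x s = 0 := by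
      rw [setLIntegral_congr_fun measurableSet_Icc
        (fun s hs => by
          rw [kE, kdens_big x s (by linarith [hs.1])])]
      simp
    rw [hz, add_zero]
    obtain ⟨hm1, hm2⟩ := vm_top x hx0
    rw [hm1, hm2]
    rw [← ENNReal.ofReal_add (by positivity) (by nlinarith)]
    rw [Hcdf, if_neg (not_lt.2 ht0), if_neg (not_lt.2 hxt), if_neg (not_lt.2 hmt)]
    congr 1
    ring


lemma rdeMap_eq (x u : ℝ) (hu : 0 ≤ u) :
    rdeMap (x, u) = (1+x) * Real.sqrt u - u := by
  have h := Real.mul_self_sqrt hu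
  rw [rdeMap]
  nlinarith [h]

set_option maxHeartbeats 1000000 in
lemma L2 (x t : ℝ) (hx0 : 0 ≤ x) (hx1 : x ≤ 1) :
    unif {u | rdeMap (x, u) ≤ t} = ENNReal.ofReal (Hcdf x t) := by
  rw [show (unif : Measure ℝ) = volume.restrict (Set.Icc 0 1) from rfl,
    Measure.restrict_apply' measurableSet_Icc]
  rcases lt_or_ge t 0 with ht | ht0
  · rw [Hcdf, if_pos ht]
    have hempty : {u | rdeMap (x, u) ≤ t} ∩ Set.Icc 0 1 = ∅ := by
      rw [Set.eq_empty_iff_forall_notMem]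
      rintro u ⟨(hle : rdeMap (x,u) ≤ t), hu0, hu1⟩
      have h1 : 0 ≤ Real.sqrt u := Real.sqrt_nonneg u
      have h2 : Real.sqrt u ≤ 1 := by
        rw [show (1:ℝ) = Real.sqrt 1 by simp]; exact Real.sqrt_le_sqrt hu1
      have h3 : 0 ≤ rdeMap (x, u) := by
        rw [rdeMap]
        have : 0 ≤ Real.sqrt u * x := mul_nonneg h1 hx0
        nlinarith
      linarith
    rw [hempty]
    simp
  rcases lt_or_ge (4*t) ((1+x)^2) with htm | hmt
  · -- 0 ≤ t, 4t < (1+x)^2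
    have harg : 0 ≤ (1+x)^2 - 4*t := by linarith
    have hargpos : 0 < (1+x)^2 - 4*t := by linarith
    have hσ : 0 ≤ Real.sqrt ((1+x)^2 - 4*t) := Real.sqrt_nonneg _
    have hσpos : 0 < Real.sqrt ((1+x)^2 - 4*t) := Real.sqrt_pos.2 hargpos
    have hσsq : Real.sqrt ((1+x)^2 - 4*t) ^ 2 = (1+x)^2 - 4*t := Real.sq_sqrt harg
    have hσc : Real.sqrt ((1+x)^2 - 4*t) ≤ 1 + x := by
      calc Real.sqrt ((1+x)^2 - 4*t) ≤ Real.sqrt ((1+x)^2) := Real.sqrt_le_sqrt (by linarith)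
        _ = 1+x := Real.sqrt_sq (by linarith)
    have hvm0 : 0 ≤ vmin x t := by rw [vmin]; linarith
    have hvM0 : 0 ≤ vmax x t := by rw [vmax]; linarith
    have hvmle : vmin x t < vmax x t := by rw [vmin, vmax]; linarith
    have hvm1 : vmin x t ≤ 1 := by rw [vmin]; linarith
    have hvmsq1 : vmin x t ^ 2 ≤ 1 := by nlinarith
    have hkey : ∀ u, 0 ≤ u → (rdeMap (x,u) ≤ t ↔ (u ≤ vmin x t ^ 2 ∨ vmax x t ^ 2 ≤ u)) := by
      intro u hu
      rw [rdeMap_eq x u hu]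
      have husq : Real.sqrt u ^ 2 = u := Real.sq_sqrt hu
      have hu0 : 0 ≤ Real.sqrt u := Real.sqrt_nonneg u
      have hfac : (1+x) * Real.sqrt u - u ≤ t ↔
          0 ≤ (Real.sqrt u - vmin x t) * (Real.sqrt u - vmax x t) := by
        rw [vmin, vmax]
        constructor <;> intro h <;> nlinarith [husq, hσsq]
      have hdisj : (0 ≤ (Real.sqrt u - vmin x t) * (Real.sqrt u - vmax x t)) ↔
          (Real.sqrt u ≤ vmin x t ∨ vmax x t ≤ Real.sqrt u) := by
        constructor
        · intro h
          by_contra hcon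
          push_neg at hcon
          obtain ⟨h1, h2⟩ := hcon
          nlinarith
        · rintro (h | h) <;> nlinarith
      rw [hfac, hdisj, Real.sqrt_le_left hvm0, ← Real.le_sqrt hvM0 hu]
    rcases lt_or_ge t x with htx | hxt
    · -- t < x : vmax > 1
      have hσbig : 1 - x < Real.sqrt ((1+x)^2 - 4*t) := by
        nlinarith [hσsq, hσ]
      have hvM1 : 1 < vmax x t := by rw [vmax]; linarith
      have hset : {u | rdeMap (x, u) ≤ t} ∩ Set.Icc 0 1 = Set.Icc 0 (vmin x t ^ 2) := by
        ext u
        simp only [Set.mem_inter_iff, Set.mem_setOf_eq, Set.mem_Icc]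
        constructor
        · rintro ⟨h, hu0, hu1⟩
          rcases (hkey u hu0).1 h with h' | h'
          · exact ⟨hu0, h'⟩
          · exfalso; nlinarith
        · rintro ⟨hu0, hu1⟩
          exact ⟨(hkey u hu0).2 (Or.inl hu1), hu0, by nlinarith⟩
      rw [hset, Real.volume_Icc, Hcdf, if_neg (not_lt.2 ht0), if_pos htx]
      norm_num
    · -- x ≤ t : vmax ≤ 1
      have hσsmall : Real.sqrt ((1+x)^2 - 4*t) ≤ 1 - x := by
        calc Real.sqrt ((1+x)^2 - 4*t) ≤ Real.sqrt ((1-x)^2) :=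
            Real.sqrt_le_sqrt (by nlinarith)
          _ = 1 - x := Real.sqrt_sq (by linarith)
      have hvM1 : vmax x t ≤ 1 := by rw [vmax]; linarith
      have hvMsq1 : vmax x t ^ 2 ≤ 1 := by nlinarith
      have hsqlt : vmin x t ^ 2 < vmax x t ^ 2 := by nlinarith
      have hset : {u | rdeMap (x, u) ≤ t} ∩ Set.Icc 0 1
          = Set.Icc 0 (vmin x t ^ 2) ∪ Set.Icc (vmax x t ^ 2) 1 := by
        ext u
        simp only [Set.mem_inter_iff, Set.mem_setOf_eq, Set.mem_Icc, Set.mem_union]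
        constructor
        · rintro ⟨h, hu0, hu1⟩
          rcases (hkey u hu0).1 h with h' | h'
          · exact Or.inl ⟨hu0, h'⟩
          · exact Or.inr ⟨h', hu1⟩
        · rintro (⟨hu0, hu1⟩ | ⟨hu0, hu1⟩)
          · exact ⟨(hkey u hu0).2 (Or.inl hu1), hu0, by nlinarith⟩
          · refine ⟨(hkey u (by nlinarith)).2 (Or.inr hu0), by nlinarith, hu1⟩
      rw [hset, measure_union (by
          rw [Set.disjoint_left]
          rintro u ⟨_, hu1⟩ ⟨hu2, _⟩
          linarith) measurableSet_Icc]
      rw [Real.volume_Icc, Real.volume_Icc]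
      rw [Hcdf, if_neg (not_lt.2 ht0), if_neg (not_lt.2 hxt), if_pos htm]
      rw [← ENNReal.ofReal_add (by nlinarith [sq_nonneg (vmin x t)]) (by linarith)]
      congr 1
      ring
  · -- (1+x)^2 ≤ 4t
    have hc1 : (1:ℝ) ≤ 1 + x := by linarith
    have hset : {u | rdeMap (x, u) ≤ t} ∩ Set.Icc 0 1 = Set.Icc 0 1 := by
      rw [Set.inter_eq_right]
      intro u hu
      obtain ⟨hu0, hu1⟩ := hu
      have husq : Real.sqrt u ^ 2 = u := Real.sq_sqrt hu0
      show rdeMap (x, u) ≤ t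
      rw [rdeMap_eq x u hu0]
      nlinarith [sq_nonneg (Real.sqrt u - (1+x)/2)]
    rw [hset, Real.volume_Icc, Hcdf, if_neg (not_lt.2 ht0),
      if_neg (not_lt.2 (by nlinarith : x ≤ t)), if_neg (not_lt.2 hmt)]
    norm_num

end RDEAux2


/-- The solution `X` of the RDE `X =_d √U·X + √U·(1 − √U)` has a Lebesgue density `f`
vanishing outside `[0,1]` and satisfying the integral equation
`f(t) = 2·∫_{2√t−1}^{t} g(x,t)·f(x) dx + ∫_{t}^{1} (g(x,t) − 1)·f(x) dx` for `t ∈ [0,1]`,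
where `g(x,t) = (1+x)/√((1+x)² − 4t)`. -/
theorem rde_density_exists (μ : Measure ℝ) (hμ : IsRDESolution μ) :
    ∃ f : ℝ → ℝ, IsRDEDensity μ f := by
  classical
  obtain ⟨hprob, hfix⟩ := id hμ
  haveI := hprob
  have hsupp := RDEAux.supp_subset μ hμ
  have haex : ∀ᵐ x ∂μ, x ∈ Set.Icc (0:ℝ) 1 := by
    rw [MeasureTheory.ae_iff]
    exact hsupp
  have hkEm : Measurable (fun p : ℝ × ℝ => RDEAux.kE p.1 p.2) := RDEAux.measurable_kE
  set f0 : ℝ → ENNReal := fun t => ∫⁻ x, RDEAux.kE x t ∂μ with hf0def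
  have hf0m : Measurable f0 := by
    apply Measurable.lintegral_prod_right (f := fun t x => RDEAux.kE x t)
    exact (hkEm.comp measurable_swap : Measurable fun p : ℝ × ℝ => RDEAux.kE p.2 p.1)
  have hwd : μ = volume.withDensity f0 := by
    refine Measure.ext_of_Iic μ _ (fun a => ?_)
    have h1 : μ (Set.Iic a) = ∫⁻ x, unif {u | rdeMap (x,u) ≤ a} ∂μ := by
      conv_lhs => rw [← hfix]
      rw [Measure.map_apply RDEAux.measurable_rdeMap measurableSet_Iic,
        Measure.prod_apply (RDEAux.measurable_rdeMap measurableSet_Iic)]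
      rfl
    rw [h1, withDensity_apply _ measurableSet_Iic]
    have h2 : ∫⁻ x, unif {u | rdeMap (x,u) ≤ a} ∂μ
        = ∫⁻ x, ∫⁻ s in Set.Iic a, RDEAux.kE x s ∂volume ∂μ := by
      refine lintegral_congr_ae (haex.mono fun x hx => ?_)
      show unif {u | rdeMap (x, u) ≤ a} = ∫⁻ s in Set.Iic a, RDEAux.kE x s ∂volume
      rw [RDEAux2.L2 x a hx.1 hx.2, ← RDEAux2.L1 x a hx.1 hx.2]
    rw [h2]
    exact lintegral_lintegral_swap hkEm.aemeasurable
  have htot : ∫⁻ t, f0 t ∂volume ≠ ⊤ := by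
    have h : volume.withDensity f0 Set.univ = 1 := by rw [← hwd]; simp
    rw [withDensity_apply _ MeasurableSet.univ, Measure.restrict_univ] at h
    rw [h]; exact ENNReal.one_ne_top
  have hfin : ∀ᵐ t ∂(volume : Measure ℝ), f0 t < ⊤ := ae_lt_top hf0m htot
  have hout : ∀ᵐ t ∂(volume : Measure ℝ), t ∉ Set.Icc (0:ℝ) 1 → f0 t = 0 := by
    have h0 : ∫⁻ t in (Set.Icc (0:ℝ) 1)ᶜ, f0 t ∂volume = 0 := by
      rw [← withDensity_apply _ measurableSet_Icc.compl, ← hwd]; exact hsupp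
    exact ae_imp_of_ae_restrict ((lintegral_eq_zero_iff hf0m).1 h0)
  set FF : ℝ → ℝ := fun t => (f0 t).toReal with hFFdef
  have hFFm : Measurable FF := hf0m.ennreal_toReal
  have hFFnn : ∀ t, 0 ≤ FF t := fun t => ENNReal.toReal_nonneg
  have hFf0 : ∀ᵐ t ∂(volume : Measure ℝ), ENNReal.ofReal (FF t) = f0 t :=
    hfin.mono fun t ht => ENNReal.ofReal_toReal ht.ne
  have hgxm : ∀ t : ℝ, Measurable (fun x => gdens x t) := fun t =>
    RDEAux.measurable_gdens.comp (measurable_id.prodMk measurable_const)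
  -- the key identity
  have key : ∀ t, 0 ≤ t → t ≤ 1 → f0 t
      = (∫⁻ x in Set.Ioc (2*Real.sqrt t - 1) t,
          ENNReal.ofReal (2 * (gdens x t * FF x)) ∂volume)
        + ∫⁻ x in Set.Ioc t 1, ENNReal.ofReal ((gdens x t - 1) * FF x) ∂volume := by
    intro t ht0 ht1
    have hkt : Measurable (fun x => RDEAux.kE x t) :=
      hkEm.comp (measurable_id.prodMk measurable_const)
    have hstep : f0 t = ∫⁻ x, ENNReal.ofReal (FF x) * RDEAux.kE x t ∂volume := by
      calc f0 t = ∫⁻ x, RDEAux.kE x t ∂(volume.withDensity f0) := by rw [← hwd]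
        _ = ∫⁻ x, (f0 * fun x => RDEAux.kE x t) x ∂volume :=
            lintegral_withDensity_eq_lintegral_mul volume hf0m hkt
        _ = ∫⁻ x, ENNReal.ofReal (FF x) * RDEAux.kE x t ∂volume := by
            refine lintegral_congr_ae (hFf0.mono fun x hx => ?_)
            simp only [Pi.mul_apply]
            rw [hx]
    rw [hstep]
    have hsq : Real.sqrt t ^ 2 = t := Real.sq_sqrt ht0
    have hsnn : 0 ≤ Real.sqrt t := Real.sqrt_nonneg t
    have hdecomp : ∀ᵐ x ∂(volume : Measure ℝ), ENNReal.ofReal (FF x) * RDEAux.kE x t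
        = (Set.Ioc (2*Real.sqrt t - 1) t).indicator
            (fun x => ENNReal.ofReal (2 * (gdens x t * FF x))) x
          + (Set.Ioc t 1).indicator (fun x => ENNReal.ofReal ((gdens x t - 1) * FF x)) x := by
      refine hout.mono fun x hx => ?_
      by_cases hxI : x ∈ Set.Icc (0:ℝ) 1
      · obtain ⟨hx0, hx1⟩ := hxI
        by_cases h1 : x ∈ Set.Ioc (2*Real.sqrt t - 1) t
        · obtain ⟨h1a, h1b⟩ := h1
          have h4t : 4*t < (1+x)^2 := by nlinarith
          have hk : RDEAux.kE x t = ENNReal.ofReal (2 * gdens x t) := by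
            rw [RDEAux.kE, RDEAux.kdens, if_pos ⟨ht0, h1b, h4t⟩]
          rw [hk, Set.indicator_of_mem (Set.mem_Ioc.2 ⟨h1a, h1b⟩), Set.indicator_of_notMem (by
            simp only [Set.mem_Ioc, not_and_or, not_lt]
            exact Or.inl h1b), add_zero]
          rw [← ENNReal.ofReal_mul (hFFnn x)]
          congr 1
          ring
        · by_cases h2 : x ∈ Set.Ioc t 1
          · obtain ⟨h2a, h2b⟩ := h2
            have hk : RDEAux.kE x t = ENNReal.ofReal (gdens x t - 1) := by
              rw [RDEAux.kE, RDEAux.kdens,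
                if_neg (by push_neg; intro _ hxt; exfalso; linarith),
                if_pos ⟨ht0, h2a⟩]
            rw [hk, Set.indicator_of_notMem h1,
              Set.indicator_of_mem (Set.mem_Ioc.2 ⟨h2a, h2b⟩), zero_add]
            rw [← ENNReal.ofReal_mul (hFFnn x)]
            congr 1
            ring
          · have hxt : x ≤ t := by
              by_contra hcon
              exact h2 ⟨not_le.1 hcon, hx1⟩
            have hxs : x ≤ 2*Real.sqrt t - 1 := by
              by_contra hcon
              exact h1 ⟨not_le.1 hcon, hxt⟩
            have h4t : (1+x)^2 ≤ 4*t := by nlinarith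
            have hk : RDEAux.kE x t = 0 := by
              rw [RDEAux.kE, RDEAux.kdens_big x t h4t]
              exact ENNReal.ofReal_zero
            rw [hk, Set.indicator_of_notMem h1, Set.indicator_of_notMem h2]
            simp
      · have hF0 : FF x = 0 := by
          rw [hFFdef]
          simp only [hx hxI, ENNReal.toReal_zero]
        by_cases h1 : x ∈ Set.Ioc (2*Real.sqrt t - 1) t <;>
          by_cases h2 : x ∈ Set.Ioc t 1 <;>
          simp [Set.indicator_apply, h1, h2, hF0]
    rw [lintegral_congr_ae hdecomp]
    rw [lintegral_add_left (f := fun x => (Set.Ioc (2*Real.sqrt t - 1) t).indicator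
        (fun x => ENNReal.ofReal (2 * (gdens x t * FF x))) x)
      ((((((hgxm t).mul hFFm).const_mul 2).ennreal_ofReal)).indicator measurableSet_Ioc)]
    rw [lintegral_indicator measurableSet_Ioc, lintegral_indicator measurableSet_Ioc]
  -- real-valued integrands
  set ψ1 : ℝ × ℝ → ℝ := fun p =>
    if 2*Real.sqrt p.1 - 1 < p.2 ∧ p.2 ≤ p.1 then gdens p.2 p.1 * FF p.2 else 0 with hψ1def
  set ψ2 : ℝ × ℝ → ℝ := fun p =>
    if p.1 < p.2 ∧ p.2 ≤ 1 then (gdens p.2 p.1 - 1) * FF p.2 else 0 with hψ2def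
  have hgm : Measurable (fun p : ℝ × ℝ => gdens p.2 p.1) :=
    RDEAux.measurable_gdens.comp measurable_swap
  have hψ1m : Measurable ψ1 := by
    refine Measurable.ite ?_ (hgm.mul (hFFm.comp measurable_snd)) measurable_const
    exact (measurableSet_lt (by fun_prop) measurable_snd).inter
      (measurableSet_le measurable_snd measurable_fst)
  have hψ2m : Measurable ψ2 := by
    refine Measurable.ite ?_ ((hgm.sub measurable_const).mul (hFFm.comp measurable_snd))
      measurable_const
    exact (measurableSet_lt measurable_fst measurable_snd).inter
      (measurableSet_le measurable_snd measurable_const)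
  set AA : ℝ → ℝ := fun t => ∫ x, ψ1 (t, x) ∂volume with hAAdef
  set BB : ℝ → ℝ := fun t => ∫ x, ψ2 (t, x) ∂volume with hBBdef
  have hAAm : Measurable AA := (hψ1m.stronglyMeasurable.integral_prod_right').measurable
  have hBBm : Measurable BB := (hψ2m.stronglyMeasurable.integral_prod_right').measurable
  have hψ1eq : ∀ t x, ψ1 (t, x)
      = (Set.Ioc (2*Real.sqrt t - 1) t).indicator (fun x => gdens x t * FF x) x := by
    intro t x
    by_cases h : x ∈ Set.Ioc (2*Real.sqrt t - 1) t
    · rw [Set.indicator_of_mem h]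
      exact if_pos (Set.mem_Ioc.1 h)
    · rw [Set.indicator_of_notMem h]
      exact if_neg (fun hc => h (Set.mem_Ioc.2 hc))
  have hψ2eq : ∀ t x, ψ2 (t, x)
      = (Set.Ioc t 1).indicator (fun x => (gdens x t - 1) * FF x) x := by
    intro t x
    by_cases h : x ∈ Set.Ioc t 1
    · rw [Set.indicator_of_mem h]
      exact if_pos (Set.mem_Ioc.1 h)
    · rw [Set.indicator_of_notMem h]
      exact if_neg (fun hc => h (Set.mem_Ioc.2 hc))
  have hind1nn : ∀ t x, 0 ≤ (Set.Ioc (2*Real.sqrt t - 1) t).indicator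
      (fun x => gdens x t * FF x) x := by
    intro t x
    refine Set.indicator_nonneg (fun y hy => ?_) x
    have : (-1:ℝ) ≤ y := by
      have := Real.sqrt_nonneg t
      have := hy.1
      linarith
    exact mul_nonneg (RDEAux.gdens_nonneg y t this) (hFFnn y)
  have hind2nn : ∀ t, 0 ≤ t → ∀ x, 0 ≤ (Set.Ioc t 1).indicator
      (fun x => (gdens x t - 1) * FF x) x := by
    intro t ht0 x
    refine Set.indicator_nonneg (fun y hy => ?_) x
    obtain ⟨hy1, hy2⟩ := hy
    have hy0 : 0 ≤ y := le_trans ht0 hy1.le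
    have harg : 0 < (1+y)^2 - 4*t := by nlinarith
    have := RDEAux.gdens_ge_one y t hy0 ht0 harg
    exact mul_nonneg (by linarith) (hFFnn y)
  have hind1m : ∀ t : ℝ, Measurable fun x => (Set.Ioc (2*Real.sqrt t - 1) t).indicator
      (fun x => gdens x t * FF x) x :=
    fun t => ((hgxm t).mul hFFm).indicator measurableSet_Ioc
  have hind2m : ∀ t : ℝ, Measurable fun x => (Set.Ioc t 1).indicator
      (fun x => (gdens x t - 1) * FF x) x :=
    fun t => (((hgxm t).sub measurable_const).mul hFFm).indicator measurableSet_Ioc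
  have hAAint : ∀ t : ℝ, AA t = (∫⁻ x in Set.Ioc (2*Real.sqrt t - 1) t,
      ENNReal.ofReal (gdens x t * FF x) ∂volume).toReal := by
    intro t
    calc AA t = ∫ x, (Set.Ioc (2*Real.sqrt t - 1) t).indicator
          (fun x => gdens x t * FF x) x ∂volume :=
        integral_congr_ae (ae_of_all _ fun x => hψ1eq t x)
      _ = (∫⁻ x, ENNReal.ofReal ((Set.Ioc (2*Real.sqrt t - 1) t).indicator
            (fun x => gdens x t * FF x) x) ∂volume).toReal :=
        integral_eq_lintegral_of_nonneg_ae (ae_of_all _ (hind1nn t))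
          (hind1m t).aestronglyMeasurable
      _ = (∫⁻ x in Set.Ioc (2*Real.sqrt t - 1) t,
            ENNReal.ofReal (gdens x t * FF x) ∂volume).toReal := by
        congr 1
        rw [← lintegral_indicator measurableSet_Ioc]
        refine lintegral_congr fun x => ?_
        by_cases h : x ∈ Set.Ioc (2*Real.sqrt t - 1) t
        · rw [Set.indicator_of_mem h, Set.indicator_of_mem h]
        · rw [Set.indicator_of_notMem h, Set.indicator_of_notMem h]
          exact ENNReal.ofReal_zero
  have hBBint : ∀ t : ℝ, 0 ≤ t → BB t = (∫⁻ x in Set.Ioc t 1,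
      ENNReal.ofReal ((gdens x t - 1) * FF x) ∂volume).toReal := by
    intro t ht0
    calc BB t = ∫ x, (Set.Ioc t 1).indicator
          (fun x => (gdens x t - 1) * FF x) x ∂volume :=
        integral_congr_ae (ae_of_all _ fun x => hψ2eq t x)
      _ = (∫⁻ x, ENNReal.ofReal ((Set.Ioc t 1).indicator
            (fun x => (gdens x t - 1) * FF x) x) ∂volume).toReal :=
        integral_eq_lintegral_of_nonneg_ae (ae_of_all _ (hind2nn t ht0))
          (hind2m t).aestronglyMeasurable
      _ = (∫⁻ x in Set.Ioc t 1,
            ENNReal.ofReal ((gdens x t - 1) * FF x) ∂volume).toReal := by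
        congr 1
        rw [← lintegral_indicator measurableSet_Ioc]
        refine lintegral_congr fun x => ?_
        by_cases h : x ∈ Set.Ioc t 1
        · rw [Set.indicator_of_mem h, Set.indicator_of_mem h]
        · rw [Set.indicator_of_notMem h, Set.indicator_of_notMem h]
          exact ENNReal.ofReal_zero
  set f : ℝ → ℝ := fun t => if t ∈ Set.Icc (0:ℝ) 1 then 2 * AA t + BB t else 0 with hfdef
  -- f agrees a.e. with FF
  have hfF : f =ᵐ[volume] FF := by
    filter_upwards [hfin, hout] with t hfint houtt
    by_cases htI : t ∈ Set.Icc (0:ℝ) 1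
    · obtain ⟨ht0, ht1⟩ := htI
      have hk := key t ht0 ht1
      show (if t ∈ Set.Icc (0:ℝ) 1 then 2 * AA t + BB t else 0) = FF t
      rw [if_pos (Set.mem_Icc.2 ⟨ht0, ht1⟩)]
      have hL1top : (∫⁻ x in Set.Ioc (2*Real.sqrt t - 1) t,
          ENNReal.ofReal (2 * (gdens x t * FF x)) ∂volume) ≠ ⊤ := by
        intro hcon
        rw [hk, hcon] at hfint
        simp at hfint
      have hL2top : (∫⁻ x in Set.Ioc t 1,
          ENNReal.ofReal ((gdens x t - 1) * FF x) ∂volume) ≠ ⊤ := by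
        intro hcon
        rw [hk, hcon] at hfint
        simp at hfint
      have hL1 : (∫⁻ x in Set.Ioc (2*Real.sqrt t - 1) t,
          ENNReal.ofReal (2 * (gdens x t * FF x)) ∂volume)
          = 2 * ∫⁻ x in Set.Ioc (2*Real.sqrt t - 1) t,
              ENNReal.ofReal (gdens x t * FF x) ∂volume := by
        rw [← lintegral_const_mul (f := fun x => ENNReal.ofReal (gdens x t * FF x)) 2 (((hgxm t).mul hFFm).ennreal_ofReal)]
        refine lintegral_congr fun x => ?_
        rw [show (2:ENNReal) = ENNReal.ofReal 2 by simp, ← ENNReal.ofReal_mul (by norm_num)]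
      show 2 * AA t + BB t = (f0 t).toReal
      rw [hAAint t, hBBint t ht0, hk, ENNReal.toReal_add hL1top hL2top, hL1,
        ENNReal.toReal_mul]
      simp
    · show (if t ∈ Set.Icc (0:ℝ) 1 then 2 * AA t + BB t else 0) = FF t
      rw [if_neg htI]
      show (0:ℝ) = (f0 t).toReal
      rw [houtt htI]
      simp
  refine ⟨f, ?_, ?_, ?_, ?_, ?_⟩
  · -- measurable
    exact Measurable.ite measurableSet_Icc ((hAAm.const_mul 2).add hBBm) measurable_const
  · -- nonneg
    intro t
    show 0 ≤ if t ∈ Set.Icc (0:ℝ) 1 then 2 * AA t + BB t else 0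
    by_cases htI : t ∈ Set.Icc (0:ℝ) 1
    · rw [if_pos htI]
      have hAAnn : 0 ≤ AA t :=
        integral_nonneg fun x => (hψ1eq t x).symm ▸ hind1nn t x
      have hBBnn : 0 ≤ BB t :=
        integral_nonneg fun x => (hψ2eq t x).symm ▸ hind2nn t htI.1 x
      linarith
    · rw [if_neg htI]
  · -- withDensity
    refine hwd.trans (withDensity_congr_ae ?_)
    filter_upwards [hfF, hFf0] with t h1 h2
    rw [h1, h2]
  · -- vanishing outside [0,1]
    intro t ht
    show (if t ∈ Set.Icc (0:ℝ) 1 then 2 * AA t + BB t else 0) = 0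
    rw [if_neg]
    rcases ht with ht | ht <;> simp only [Set.mem_Icc, not_and_or, not_le] <;>
      [exact Or.inl ht; exact Or.inr ht]
  · -- the integral equation
    intro t htI
    obtain ⟨ht0, ht1⟩ := htI
    have hsq : Real.sqrt t ^ 2 = t := Real.sq_sqrt ht0
    have h2s : 2*Real.sqrt t - 1 ≤ t := by
      nlinarith [sq_nonneg (Real.sqrt t - 1)]
    show (if t ∈ Set.Icc (0:ℝ) 1 then 2 * AA t + BB t else 0) = _
    rw [if_pos (Set.mem_Icc.2 ⟨ht0, ht1⟩)]
    have hAAf : AA t = ∫ x in (2*Real.sqrt t - 1)..t, gdens x t * f x := by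
      rw [intervalIntegral.integral_of_le h2s]
      calc AA t = ∫ x, (Set.Ioc (2*Real.sqrt t - 1) t).indicator
            (fun x => gdens x t * FF x) x ∂volume :=
          integral_congr_ae (ae_of_all _ fun x => hψ1eq t x)
        _ = ∫ x in Set.Ioc (2*Real.sqrt t - 1) t, gdens x t * FF x ∂volume :=
          integral_indicator measurableSet_Ioc
        _ = ∫ x in Set.Ioc (2*Real.sqrt t - 1) t, gdens x t * f x ∂volume := by
          refine setIntegral_congr_ae measurableSet_Ioc (hfF.mono fun x hx _ => ?_)
          rw [hx]
    have hBBf : BB t = ∫ x in t..(1:ℝ), (gdens x t - 1) * f x := by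
      rw [intervalIntegral.integral_of_le ht1]
      calc BB t = ∫ x, (Set.Ioc t 1).indicator
            (fun x => (gdens x t - 1) * FF x) x ∂volume :=
          integral_congr_ae (ae_of_all _ fun x => hψ2eq t x)
        _ = ∫ x in Set.Ioc t 1, (gdens x t - 1) * FF x ∂volume :=
          integral_indicator measurableSet_Ioc
        _ = ∫ x in Set.Ioc t 1, (gdens x t - 1) * f x ∂volume := by
          refine setIntegral_congr_ae measurableSet_Ioc (hfF.mono fun x hx _ => ?_)
          rw [hx]
    rw [hAAf, hBBf]
end
end
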